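/- arXiv:1607.03482 — 9 statements merged into one kernel-verified Lean document; each statement's English description precedes it below -/
import Mathlib

section
/- Let c > 0 and let x : ℝ → ℝ³ be C¹ with ‖x'(t)‖ < c for all t. Set ξ(t) := c·t − x³(t); then ξ is strictly increasing with C¹ inverse t̂ on the open interval J = ξ(ℝ), and x̂ := x ∘ t̂ is C¹ on J. For every t ∈ ℝ: (i) x̂'(ξ(t)) = x'(t)/(c − (x³)'(t)); (ii) 1 + 2(x̂³)'(ξ(t)) − ((x̂¹)'(ξ(t)))² − ((x̂²)'(ξ(t)))² = (1 − ‖x'(t)‖²/c²)/(1 − (x³)'(t)/c)² > 0; (iii) hence, defining s(t) := (1 − (x³)'(t)/c)/√(1 − ‖x'(t)‖²/c²), one has 1/s(t) = √(1 + 2(x̂³)'(ξ(t)) − ((x̂¹)'(ξ(t)))² − ((x̂²)'(ξ(t)))²). -/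
/-- If `x : ℝ → ℝ³` is C¹ with `‖x'(t)‖ < c`, then
`ξ(t) = c·t − x³(t)` is strictly increasing with a C¹ inverse `t̂` on `J = ξ(ℝ)`,
`x̂ = x ∘ t̂` is C¹ on `J`, and for every `t`:
(i) `x̂'(ξ(t)) = x'(t)/(c − (x³)'(t))`;
(ii) `1 + 2(x̂³)' − ((x̂¹)')² − ((x̂²)')² = (1 − ‖x'‖²/c²)/(1 − (x³)'/c)² > 0` at `ξ(t)`;
(iii) with `s(t) = (1 − (x³)'(t)/c)/√(1 − ‖x'(t)‖²/c²)`, one has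
`1/s(t) = √(1 + 2(x̂³)' − ((x̂¹)')² − ((x̂²)')²)` at `ξ(t)`. -/
theorem stmt_2 (c : ℝ) (hc : 0 < c) (x : ℝ → EuclideanSpace ℝ (Fin 3))
    (hx : ContDiff ℝ 1 x) (hlt : ∀ t : ℝ, ‖deriv x t‖ < c) :
    StrictMono (fun t : ℝ => c * t - x t 2) ∧
    ∃ tinv : ℝ → ℝ,
      (∀ t : ℝ, tinv (c * t - x t 2) = t) ∧
      ContDiffOn ℝ 1 tinv (Set.range fun t : ℝ => c * t - x t 2) ∧
      ContDiffOn ℝ 1 (x ∘ tinv) (Set.range fun t : ℝ => c * t - x t 2) ∧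
      ∀ t : ℝ,
        HasDerivAt (x ∘ tinv) ((c - deriv (fun s : ℝ => x s 2) t)⁻¹ • deriv x t)
          (c * t - x t 2) ∧
        (1 + 2 * deriv (fun ξ : ℝ => (x ∘ tinv) ξ 2) (c * t - x t 2)
            - (deriv (fun ξ : ℝ => (x ∘ tinv) ξ 0) (c * t - x t 2)) ^ 2
            - (deriv (fun ξ : ℝ => (x ∘ tinv) ξ 1) (c * t - x t 2)) ^ 2
          = (1 - ‖deriv x t‖ ^ 2 / c ^ 2) / (1 - deriv (fun s : ℝ => x s 2) t / c) ^ 2) ∧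
        (0 < (1 - ‖deriv x t‖ ^ 2 / c ^ 2) / (1 - deriv (fun s : ℝ => x s 2) t / c) ^ 2) ∧
        ((1 - deriv (fun s : ℝ => x s 2) t / c) / Real.sqrt (1 - ‖deriv x t‖ ^ 2 / c ^ 2))⁻¹
          = Real.sqrt (1 + 2 * deriv (fun ξ : ℝ => (x ∘ tinv) ξ 2) (c * t - x t 2)
              - (deriv (fun ξ : ℝ => (x ∘ tinv) ξ 0) (c * t - x t 2)) ^ 2
              - (deriv (fun ξ : ℝ => (x ∘ tinv) ξ 1) (c * t - x t 2)) ^ 2) := by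
  have hdx : ∀ t, HasDerivAt x (deriv x t) t := fun t =>
    (hx.differentiable one_ne_zero t).hasDerivAt
  have hcomp : ∀ (i : Fin 3) (t : ℝ), HasDerivAt (fun s : ℝ => x s i) (deriv x t i) t :=
    fun i t => by
    have h := ((EuclideanSpace.proj i : EuclideanSpace ℝ (Fin 3) →L[ℝ] ℝ).hasFDerivAt).comp_hasDerivAt t (hdx t)
    exact h
  have hd3 : ∀ t, deriv (fun s : ℝ => x s 2) t = deriv x t 2 := fun t => (hcomp 2 t).deriv
  -- norm squared as sum
  have hn : ∀ t, ‖deriv x t‖ ^ 2 = (deriv x t 0) ^ 2 + (deriv x t 1) ^ 2 + (deriv x t 2) ^ 2 := by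
    intro t
    rw [EuclideanSpace.norm_eq, Real.sq_sqrt (Finset.sum_nonneg fun i _ => sq_nonneg _)]
    simp [Fin.sum_univ_three, Real.norm_eq_abs, sq_abs]
  have habs : ∀ t, |deriv x t 2| ≤ ‖deriv x t‖ := by
    intro t
    have h2 : (deriv x t 2) ^ 2 ≤ ‖deriv x t‖ ^ 2 := by
      rw [hn t]
      nlinarith [sq_nonneg (deriv x t 0), sq_nonneg (deriv x t 1)]
    calc |deriv x t 2| = Real.sqrt ((deriv x t 2) ^ 2) := (Real.sqrt_sq_eq_abs _).symm
      _ ≤ Real.sqrt (‖deriv x t‖ ^ 2) := Real.sqrt_le_sqrt h2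
      _ = ‖deriv x t‖ := Real.sqrt_sq (norm_nonneg _)
  have hpos : ∀ t, 0 < c - deriv x t 2 := by
    intro t
    have := lt_of_le_of_lt (habs t) (hlt t)
    have := (abs_lt.mp this).2
    linarith
  set ξ : ℝ → ℝ := fun t : ℝ => c * t - x t 2 with hξdef
  have hξ' : ∀ t, HasDerivAt ξ (c - deriv x t 2) t := by
    intro t
    have h1 : HasDerivAt (fun t : ℝ => c * t) c t := by
      simpa using (hasDerivAt_id t).const_mul c
    exact h1.sub (hcomp 2 t)
  have hξC : ContDiff ℝ 1 ξ := by
    have h := ((EuclideanSpace.proj (2:Fin 3) : EuclideanSpace ℝ (Fin 3) →L[ℝ] ℝ).contDiff.comp hx : ContDiff ℝ 1 fun t : ℝ => x t 2)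
    exact (contDiff_const.mul contDiff_id).sub h
  have hξstrict : ∀ t, HasStrictDerivAt ξ (c - deriv x t 2) t := by
    intro t
    have h := (hξC.contDiffAt (x := t)).hasStrictDerivAt one_ne_zero
    rwa [(hξ' t).deriv] at h
  have hmono : StrictMono ξ := by
    apply strictMono_of_deriv_pos
    intro t
    rw [(hξ' t).deriv]
    exact hpos t
  have hinj : Function.Injective ξ := hmono.injective
  set tinv : ℝ → ℝ := Function.invFun ξ with htinvdef
  have hleft : ∀ t, tinv (ξ t) = t := fun t => Function.leftInverse_invFun hinj t
  have hopen : IsOpen (Set.range ξ) :=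
    (isOpenMap_of_hasStrictDerivAt hξstrict fun t => (hpos t).ne').isOpen_range
  have htinv' : ∀ t, HasStrictDerivAt tinv (c - deriv x t 2)⁻¹ (ξ t) := fun t =>
    (hξstrict t).to_local_left_inverse (hpos t).ne' (Filter.Eventually.of_forall hleft)
  have htinvCont : ContinuousOn tinv (Set.range ξ) := by
    rintro y ⟨t, rfl⟩
    exact ((htinv' t).hasDerivAt.continuousAt).continuousWithinAt
  have hDcont : Continuous fun t : ℝ => deriv x t 2 :=
    (EuclideanSpace.proj (2 : Fin 3)).continuous.comp (hx.continuous_deriv le_rfl)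
  have htinvCD : ContDiffOn ℝ 1 tinv (Set.range ξ) := by
    rw [show (1 : WithTop ℕ∞) = 0 + 1 by norm_num, contDiffOn_succ_iff_deriv_of_isOpen hopen]
    refine ⟨fun y hy => ?_, by simp, ?_⟩
    · obtain ⟨t, rfl⟩ := hy
      exact ((htinv' t).hasDerivAt.differentiableAt).differentiableWithinAt
    · rw [contDiffOn_zero]
      apply ContinuousOn.congr (f := fun y => (c - deriv x (tinv y) 2)⁻¹)
      · apply ContinuousOn.inv₀
        · exact continuousOn_const.sub ((hDcont.comp_continuousOn htinvCont))
        · rintro y ⟨t, rfl⟩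
          rw [hleft t]
          exact (hpos t).ne'
      · rintro y ⟨t, rfl⟩
        simp only [hleft t]
        exact (htinv' t).hasDerivAt.deriv
  have hxtinvCD : ContDiffOn ℝ 1 (x ∘ tinv) (Set.range ξ) := hx.comp_contDiffOn htinvCD
  refine ⟨hmono, tinv, hleft, htinvCD, hxtinvCD, fun t => ?_⟩
  -- main derivative of x ∘ tinv
  have hXi : HasDerivAt (x ∘ tinv) ((c - deriv x t 2)⁻¹ • deriv x t) (ξ t) := by
    have h1 : HasDerivAt x (deriv x t) (tinv (ξ t)) := by rw [hleft t]; exact hdx t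
    simpa using h1.scomp (ξ t) (htinv' t).hasDerivAt
  have hci : ∀ i : Fin 3,
      deriv (fun y : ℝ => (x ∘ tinv) y i) (ξ t) = (c - deriv x t 2)⁻¹ * deriv x t i := by
    intro i
    have h := (EuclideanSpace.proj i).hasFDerivAt.comp_hasDerivAt (ξ t) hXi
    have h2 : HasDerivAt (fun y : ℝ => (x ∘ tinv) y i)
        ((c - deriv x t 2)⁻¹ * deriv x t i) (ξ t) := by
      simp at h; exact h
    exact h2.deriv
  set a := deriv x t 0
  set b := deriv x t 1
  set d := deriv x t 2
  have hcd : 0 < c - d := hpos t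
  have hdc : d < c := by linarith
  have h1dc : 0 < 1 - d / c := by
    rw [sub_pos, div_lt_one hc]; exact hdc
  have hnormlt : ‖deriv x t‖ ^ 2 < c ^ 2 := by
    have := hlt t
    nlinarith [norm_nonneg (deriv x t)]
  have hnum : 0 < 1 - ‖deriv x t‖ ^ 2 / c ^ 2 := by
    rw [sub_pos, div_lt_one (by positivity)]; exact hnormlt
  have heq : 1 + 2 * deriv (fun ξ : ℝ => (x ∘ tinv) ξ 2) (ξ t)
      - (deriv (fun ξ : ℝ => (x ∘ tinv) ξ 0) (ξ t)) ^ 2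
      - (deriv (fun ξ : ℝ => (x ∘ tinv) ξ 1) (ξ t)) ^ 2
      = (1 - ‖deriv x t‖ ^ 2 / c ^ 2) / (1 - d / c) ^ 2 := by
    rw [hci 0, hci 1, hci 2, hn t]
    field_simp
    ring
  refine ⟨by rwa [hd3 t], by rwa [hd3 t], ?_, ?_⟩
  · rw [hd3 t]
    exact div_pos hnum (by positivity)
  · rw [hd3 t]
    show (_ : ℝ)⁻¹ = Real.sqrt (1 + 2 * deriv (fun ξ : ℝ => (x ∘ tinv) ξ 2) (ξ t)
      - (deriv (fun ξ : ℝ => (x ∘ tinv) ξ 0) (ξ t)) ^ 2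
      - (deriv (fun ξ : ℝ => (x ∘ tinv) ξ 1) (ξ t)) ^ 2)
    rw [heq, Real.sqrt_div hnum.le, Real.sqrt_sq h1dc.le, inv_div]
end

section
/- Let (x,p) be a C¹ solution of the Lorentz equations with continuous fields E, B. Let ξ(t) := ct − x³(t), t̂ its C¹ inverse on J = ξ(ℝ), and define on J the hatted variables x̂ := x ∘ t̂, û := (p/(mc)) ∘ t̂, γ̂ := √(1 + ‖û‖²), ŝ := γ̂ − û³, Ê(ξ) := E(t̂(ξ), x̂(ξ)), B̂(ξ) := B(t̂(ξ), x̂(ξ)). Then for all ξ ∈ J: (x̂ᵃ)'(ξ) = ûᵃ(ξ)/ŝ(ξ) for a = 1,2; (x̂³)'(ξ) = (1 + (û¹(ξ))² + (û²(ξ))²)/(2ŝ(ξ)²) − 1/2; (ûᵃ)'(ξ) = (q/(mc²ŝ(ξ)))·(γ̂(ξ)Ê(ξ) + û(ξ) × B̂(ξ))ᵃ for a = 1,2; and ŝ'(ξ) = (q/(mc²))·[(û¹Ê¹ + û²Ê²)(ξ)/ŝ(ξ) − Ê³(ξ) − (û¹B̂² − û²B̂¹)(ξ)/ŝ(ξ)].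 -/
noncomputable section

/-- Squared Euclidean norm on `Fin 3 → ℝ`. -/
def sq3 (v : Fin 3 → ℝ) : ℝ := v 0 ^ 2 + v 1 ^ 2 + v 2 ^ 2

/-- Cross product on `Fin 3 → ℝ`. -/
def cross (a b : Fin 3 → ℝ) : Fin 3 → ℝ :=
  ![a 1 * b 2 - a 2 * b 1, a 2 * b 0 - a 0 * b 2, a 0 * b 1 - a 1 * b 0]

/-- `(x, p)` is a C¹ solution of the Lorentz equations
`p' = qE + (p/√(m²c²+‖p‖²)) × qB`, `x' = c·p/√(m²c²+‖p‖²)`. -/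
def IsLorentzSolution (m c q : ℝ) (E B : ℝ → (Fin 3 → ℝ) → (Fin 3 → ℝ))
    (x p : ℝ → Fin 3 → ℝ) : Prop :=
  ∀ t : ℝ,
    HasDerivAt p
      (q • E t (x t) +
        cross ((Real.sqrt (m ^ 2 * c ^ 2 + sq3 (p t)))⁻¹ • p t) (q • B t (x t))) t ∧
    HasDerivAt x ((c / Real.sqrt (m ^ 2 * c ^ 2 + sq3 (p t))) • p t) t

/-- Position as a function of the light-like coordinate `ξ`. -/
def xhat (x : ℝ → Fin 3 → ℝ) (tinv : ℝ → ℝ) (ξ : ℝ) : Fin 3 → ℝ := x (tinv ξ)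

/-- Dimensionless momentum `u = p/(mc)` as a function of `ξ`. -/
def uhat (m c : ℝ) (p : ℝ → Fin 3 → ℝ) (tinv : ℝ → ℝ) (ξ : ℝ) : Fin 3 → ℝ :=
  (m * c)⁻¹ • p (tinv ξ)

/-- Lorentz factor `γ = √(1+‖u‖²)` as a function of `ξ`. -/
def gammahat (m c : ℝ) (p : ℝ → Fin 3 → ℝ) (tinv : ℝ → ℝ) (ξ : ℝ) : ℝ :=
  Real.sqrt (1 + sq3 (uhat m c p tinv ξ))

/-- Light-like relativistic factor `s = γ − u³` as a function of `ξ`. -/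
def shat (m c : ℝ) (p : ℝ → Fin 3 → ℝ) (tinv : ℝ → ℝ) (ξ : ℝ) : ℝ :=
  gammahat m c p tinv ξ - uhat m c p tinv ξ 2


set_option maxHeartbeats 1000000 in
/-- The Lorentz equations, rewritten with the light-like time
`ξ = ct − z`: `(x̂ᵃ)' = ûᵃ/ŝ` (a = 1,2), `(x̂³)' = (1+(û¹)²+(û²)²)/(2ŝ²) − 1/2`,
`(ûᵃ)' = (q/(mc²ŝ))·(γ̂Ê + û×B̂)ᵃ`, and
`ŝ' = (q/(mc²))·[(û¹Ê¹+û²Ê²)/ŝ − Ê³ − (û¹B̂²−û²B̂¹)/ŝ]`. -/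
theorem stmt_3 (m c q : ℝ) (hm : 0 < m) (hc : 0 < c)
    (E B : ℝ → (Fin 3 → ℝ) → (Fin 3 → ℝ))
    (hE : Continuous fun pt : ℝ × (Fin 3 → ℝ) => E pt.1 pt.2)
    (hB : Continuous fun pt : ℝ × (Fin 3 → ℝ) => B pt.1 pt.2)
    (x p : ℝ → Fin 3 → ℝ) (hxC : ContDiff ℝ 1 x) (hpC : ContDiff ℝ 1 p)
    (hsol : IsLorentzSolution m c q E B x p)
    (tinv : ℝ → ℝ) (htinv : ∀ t : ℝ, tinv (c * t - x t 2) = t) :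
    ∀ t : ℝ,
      (∀ a : Fin 3, a = 0 ∨ a = 1 →
        HasDerivAt (fun η : ℝ => xhat x tinv η a)
          (uhat m c p tinv (c * t - x t 2) a / shat m c p tinv (c * t - x t 2))
          (c * t - x t 2)) ∧
      HasDerivAt (fun η : ℝ => xhat x tinv η 2)
        ((1 + (uhat m c p tinv (c * t - x t 2) 0) ^ 2
            + (uhat m c p tinv (c * t - x t 2) 1) ^ 2) /
          (2 * (shat m c p tinv (c * t - x t 2)) ^ 2) - 1 / 2)
        (c * t - x t 2) ∧
      (∀ a : Fin 3, a = 0 ∨ a = 1 →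
        HasDerivAt (fun η : ℝ => uhat m c p tinv η a)
          ((q / (m * c ^ 2 * shat m c p tinv (c * t - x t 2))) *
            ((gammahat m c p tinv (c * t - x t 2) •
                E (tinv (c * t - x t 2)) (xhat x tinv (c * t - x t 2)) +
              cross (uhat m c p tinv (c * t - x t 2))
                (B (tinv (c * t - x t 2)) (xhat x tinv (c * t - x t 2)))) a))
          (c * t - x t 2)) ∧
      HasDerivAt (shat m c p tinv)
        ((q / (m * c ^ 2)) *
          ((uhat m c p tinv (c * t - x t 2) 0 *
              E (tinv (c * t - x t 2)) (xhat x tinv (c * t - x t 2)) 0 +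
            uhat m c p tinv (c * t - x t 2) 1 *
              E (tinv (c * t - x t 2)) (xhat x tinv (c * t - x t 2)) 1) /
            shat m c p tinv (c * t - x t 2) -
           E (tinv (c * t - x t 2)) (xhat x tinv (c * t - x t 2)) 2 -
           (uhat m c p tinv (c * t - x t 2) 0 *
              B (tinv (c * t - x t 2)) (xhat x tinv (c * t - x t 2)) 1 -
            uhat m c p tinv (c * t - x t 2) 1 *
              B (tinv (c * t - x t 2)) (xhat x tinv (c * t - x t 2)) 0) /
            shat m c p tinv (c * t - x t 2)))
        (c * t - x t 2) := by
  intro t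
  obtain ⟨hp', hx'⟩ := hsol t
  set ξ0 := c * t - x t 2 with hξ0
  set P : Fin 3 → ℝ := p t with hP
  set N : ℝ := Real.sqrt (m ^ 2 * c ^ 2 + sq3 P) with hN
  have hmc : 0 < m * c := mul_pos hm hc
  have hsq3 : sq3 P = P 0 ^ 2 + P 1 ^ 2 + P 2 ^ 2 := rfl
  have hNsq : N ^ 2 = m ^ 2 * c ^ 2 + (P 0 ^ 2 + P 1 ^ 2 + P 2 ^ 2) := by
    rw [hN, ← hsq3]; exact Real.sq_sqrt (by rw [hsq3]; positivity)
  have hNpos : 0 < N := by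
    rw [hN]; exact Real.sqrt_pos.mpr (by rw [hsq3]; positivity)
  have hNP : P 2 < N := by nlinarith [sq_nonneg (P 0), sq_nonneg (P 1), mul_pos hm hc, sq_nonneg (m*c), hNsq, hsq3]
  set D : ℝ := c - c / N * P 2 with hDdef
  have hDeq : D = c * (N - P 2) / N := by rw [hDdef]; field_simp <;> ring
  have hDpos : 0 < D := by
    rw [hDeq]; exact div_pos (mul_pos hc (sub_pos.mpr hNP)) hNpos
  have hx3 : HasDerivAt (fun s => x s 2) (c / N * P 2) t := by
    simpa using (hasDerivAt_pi.mp hx' 2)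
  have hΞ : HasDerivAt (fun s : ℝ => c * s - x s 2) D t := by
    exact (((hasDerivAt_id t).const_mul c).sub hx3).congr_deriv (by rw [hDdef, mul_one])
  have hΞC : ContDiff ℝ 1 (fun s : ℝ => c * s - x s 2) :=
    (contDiff_const.mul contDiff_id).sub (contDiff_pi.mp hxC 2)
  have hΞs : HasStrictDerivAt (fun s : ℝ => c * s - x s 2) D t := by
    have h1 := (hΞC.contDiffAt (x := t)).hasStrictDerivAt one_ne_zero
    rwa [hΞ.deriv] at h1
  have htd : HasDerivAt tinv D⁻¹ ξ0 :=
    (hΞs.to_local_left_inverse hDpos.ne' (Filter.Eventually.of_forall htinv)).hasDerivAt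
  have htt : tinv ξ0 = t := htinv t
  set Pv : Fin 3 → ℝ := q • E t (x t) + cross (N⁻¹ • P) (q • B t (x t)) with hPv
  have hpc : HasDerivAt (fun η => p (tinv η)) (D⁻¹ • Pv) ξ0 :=
    HasDerivAt.scomp_of_eq ξ0 hp' htd htt.symm
  have hxc : HasDerivAt (fun η => x (tinv η)) (D⁻¹ • ((c / N) • P)) ξ0 :=
    HasDerivAt.scomp_of_eq ξ0 hx' htd htt.symm
  have hγ : gammahat m c p tinv ξ0 = N / (m * c) := by
    have h1 : (1 : ℝ) + sq3 (uhat m c p tinv ξ0) = (N / (m * c)) ^ 2 := by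
      simp only [uhat, htt, sq3, Pi.smul_apply, smul_eq_mul, ← hP]
      rw [div_pow, hNsq]
      field_simp
    rw [gammahat, h1, Real.sqrt_sq (by positivity)]
  have hu : ∀ i, uhat m c p tinv ξ0 i = P i / (m * c) := by
    intro i
    simp only [uhat, htt, Pi.smul_apply, smul_eq_mul, ← hP]
    rw [inv_mul_eq_div]
  have hs : shat m c p tinv ξ0 = (N - P 2) / (m * c) := by
    rw [shat, hγ, hu 2]; ring
  have hNPne : N - P 2 ≠ 0 := (sub_pos.mpr hNP).ne'
  clear hp' hx' hx3 hΞ hΞC hΞs htd hN hDdef hξ0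
  clear_value ξ0 P N D Pv
  refine ⟨?_, ?_, ?_, ?_⟩
  · intro a _
    have h := hasDerivAt_pi.mp hxc a
    have hval : (D⁻¹ • ((c / N) • P)) a
        = uhat m c p tinv ξ0 a / shat m c p tinv ξ0 := by
      rw [hu a, hs]
      simp only [Pi.smul_apply, smul_eq_mul]
      rw [hDeq]
      field_simp
    rw [hval] at h
    exact h
  · have h := hasDerivAt_pi.mp hxc 2
    have hval : (D⁻¹ • ((c / N) • P)) 2
        = (1 + uhat m c p tinv ξ0 0 ^ 2 + uhat m c p tinv ξ0 1 ^ 2)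
            / (2 * shat m c p tinv ξ0 ^ 2) - 1 / 2 := by
      rw [hu 0, hu 1, hs]
      simp only [Pi.smul_apply, smul_eq_mul]
      rw [hDeq]
      field_simp
      linear_combination hNsq
    rw [hval] at h
    exact h
  · intro a ha
    have h := (hasDerivAt_pi.mp hpc a).const_mul (m * c)⁻¹
    have hval : (m * c)⁻¹ * (D⁻¹ • Pv) a
        = (q / (m * c ^ 2 * shat m c p tinv ξ0)) *
            ((gammahat m c p tinv ξ0 • E (tinv ξ0) (xhat x tinv ξ0) +
              cross (uhat m c p tinv ξ0) (B (tinv ξ0) (xhat x tinv ξ0))) a) := by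
      rcases ha with rfl | rfl <;>
      · simp only [hPv, xhat, htt, hγ, hs, Pi.smul_apply, Pi.add_apply, smul_eq_mul, cross,
          Matrix.cons_val_zero, Matrix.cons_val_one, Matrix.head_cons, Matrix.cons_val_two,
          Matrix.tail_cons, hu 0, hu 1, hu 2]
        rw [hDeq]
        field_simp
    rw [hval] at h
    exact h
  · have hw : ∀ i, HasDerivAt (fun η => (m * c)⁻¹ * p (tinv η) i)
        ((m * c)⁻¹ * (D⁻¹ • Pv) i) ξ0 := by
      intro i
      simpa using (hasDerivAt_pi.mp hpc i).const_mul (m * c)⁻¹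
    have hF := ((((hw 0).pow 2).add ((hw 1).pow 2)).add ((hw 2).pow 2)).const_add 1
    have hFne : (1 : ℝ) + (((m * c)⁻¹ * p (tinv ξ0) 0) ^ 2 + ((m * c)⁻¹ * p (tinv ξ0) 1) ^ 2
        + ((m * c)⁻¹ * p (tinv ξ0) 2) ^ 2) ≠ 0 := by positivity
    have htotal := (hF.sqrt hFne).sub (hw 2)
    have hsfun : shat m c p tinv = fun ξ => Real.sqrt (1 + (((m * c)⁻¹ * p (tinv ξ) 0) ^ 2
        + ((m * c)⁻¹ * p (tinv ξ) 1) ^ 2 + ((m * c)⁻¹ * p (tinv ξ) 2) ^ 2))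
        - (m * c)⁻¹ * p (tinv ξ) 2 := by
      funext ξ
      simp [shat, gammahat, uhat, sq3]
    have hγ' : Real.sqrt (1 + (((m * c)⁻¹ * p (tinv ξ0) 0) ^ 2 + ((m * c)⁻¹ * p (tinv ξ0) 1) ^ 2
        + ((m * c)⁻¹ * p (tinv ξ0) 2) ^ 2)) = N / (m * c) := by
      rw [← hγ]
      simp [gammahat, uhat, sq3]
    simp only [Pi.add_apply, Pi.pow_apply, Pi.sub_def] at htotal
    rw [← hsfun] at htotal
    refine htotal.congr_deriv ?_
    symm
    rw [hγ']
    simp only [hPv, xhat, htt, hγ, hs, Pi.smul_apply, Pi.add_apply, smul_eq_mul, cross,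
      Matrix.cons_val_zero, Matrix.cons_val_one, Matrix.head_cons, Matrix.cons_val_two,
      Matrix.tail_cons, hu 0, hu 1, hu 2, ← hP]
    rw [hDeq]
    field_simp [hNPne, hNpos.ne', hmc.ne', hc.ne', hm.ne']
    have hm1 : m * m⁻¹ = 1 := mul_inv_cancel₀ hm.ne'
    have hc1 : c * c⁻¹ = 1 := mul_inv_cancel₀ hc.ne'
    linear_combination (-(2 * q * N * (P 0 * E t (x t) 0 + P 1 * E t (x t) 1 + P 2 * E t (x t) 2)) * (c * c⁻¹)) * hm1 + (-(2 * q * N * (P 0 * E t (x t) 0 + P 1 * E t (x t) 1 + P 2 * E t (x t) 2))) * hc1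
end
end

section
/- Let the electromagnetic field have the travelling-wave/static split form E(t,x) = ε⊥(ct − x³) + E_s(x), B(t,x) = k × ε⊥(ct − x³) + B_s(x), with ε⊥ : ℝ → ℝ³ continuous with vanishing third component, E_s, B_s : ℝ³ → ℝ³ continuous, and k = (0,0,1). Let (x,p) be a C¹ solution of the Lorentz equations and let x̂, û, ŝ be its ξ-parametrized variables. Then for all ξ in the range of ξ(t) = ct − x³(t): (ûᵃ)'(ξ) = (q/(mc²))·[(1 + (x̂³)'(ξ))·E_sᵃ(x̂(ξ)) + (x̂'(ξ) × B_s(x̂(ξ)))ᵃ + εᵃ(ξ)] for a = 1,2, and ŝ'(ξ) = −(q/(mc²))·[E_s³(x̂(ξ)) − (x̂¹)'(ξ)E_s¹(x̂(ξ)) − (x̂²)'(ξ)E_s²(x̂(ξ)) + (x̂¹)'(ξ)B_s²(x̂(ξ)) − (x̂²)'(ξ)B_s¹(x̂(ξ))]. In particular, the rapidly varying pump ε⊥ enters the equation for û⊥ only through its value at the independent variable ξ, and does not enter the equation for ŝ at all. -/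
noncomputable section

set_option maxHeartbeats 1000000 in
/-- For a travelling-wave/static split field
`E = ε⊥(ct−z) + E_s(x)`, `B = k×ε⊥(ct−z) + B_s(x)`, the ξ-parametrized
momentum equations read
`(ûᵃ)'(ξ) = (q/(mc²))[(1+(x̂³)')E_sᵃ(x̂) + (x̂'×B_s(x̂))ᵃ + εᵃ(ξ)]` (a = 1,2) and
`ŝ'(ξ) = −(q/(mc²))[E_s³(x̂) − (x̂¹)'E_s¹(x̂) − (x̂²)'E_s²(x̂)
  + (x̂¹)'B_s²(x̂) − (x̂²)'B_s¹(x̂)]`;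
the pump `ε⊥` enters only through its value at `ξ`. -/
theorem stmt_4 (m c q : ℝ) (hm : 0 < m) (hc : 0 < c)
    (eps : ℝ → Fin 3 → ℝ) (heps : Continuous eps) (hepsz : ∀ ξ : ℝ, eps ξ 2 = 0)
    (Es Bs : (Fin 3 → ℝ) → Fin 3 → ℝ) (hEs : Continuous Es) (hBs : Continuous Bs)
    (E B : ℝ → (Fin 3 → ℝ) → (Fin 3 → ℝ))
    (hE : ∀ (t : ℝ) (y : Fin 3 → ℝ), E t y = eps (c * t - y 2) + Es y)
    (hB : ∀ (t : ℝ) (y : Fin 3 → ℝ),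
      B t y = cross ![0, 0, 1] (eps (c * t - y 2)) + Bs y)
    (x p : ℝ → Fin 3 → ℝ) (hxC : ContDiff ℝ 1 x) (hpC : ContDiff ℝ 1 p)
    (hsol : IsLorentzSolution m c q E B x p)
    (tinv : ℝ → ℝ) (htinv : ∀ t : ℝ, tinv (c * t - x t 2) = t) :
    ∀ t : ℝ,
      (∀ a : Fin 3, a = 0 ∨ a = 1 →
        HasDerivAt (fun η : ℝ => uhat m c p tinv η a)
          ((q / (m * c ^ 2)) *
            ((1 + deriv (fun η : ℝ => xhat x tinv η 2) (c * t - x t 2)) *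
                Es (xhat x tinv (c * t - x t 2)) a +
              cross (fun i : Fin 3 => deriv (fun η : ℝ => xhat x tinv η i) (c * t - x t 2))
                (Bs (xhat x tinv (c * t - x t 2))) a +
              eps (c * t - x t 2) a))
          (c * t - x t 2)) ∧
      HasDerivAt (shat m c p tinv)
        (-(q / (m * c ^ 2)) *
          (Es (xhat x tinv (c * t - x t 2)) 2 -
            deriv (fun η : ℝ => xhat x tinv η 0) (c * t - x t 2) *
              Es (xhat x tinv (c * t - x t 2)) 0 -
            deriv (fun η : ℝ => xhat x tinv η 1) (c * t - x t 2) *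
              Es (xhat x tinv (c * t - x t 2)) 1 +
            deriv (fun η : ℝ => xhat x tinv η 0) (c * t - x t 2) *
              Bs (xhat x tinv (c * t - x t 2)) 1 -
            deriv (fun η : ℝ => xhat x tinv η 1) (c * t - x t 2) *
              Bs (xhat x tinv (c * t - x t 2)) 0))
        (c * t - x t 2) := by
  
  intro t
  obtain ⟨hp, hx⟩ := hsol t
  set w : ℝ := Real.sqrt (m ^ 2 * c ^ 2 + sq3 (p t)) with hwdef
  set ξ0 : ℝ := c * t - x t 2 with hξ0
  have hsq3 : (0:ℝ) ≤ sq3 (p t) := by unfold sq3; positivity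
  have hwpos : 0 < w := Real.sqrt_pos.2 (by positivity)
  have hw2 : w ^ 2 = m ^ 2 * c ^ 2 + (p t 0 ^ 2 + p t 1 ^ 2 + p t 2 ^ 2) := by
    rw [hwdef, Real.sq_sqrt (by positivity)]; rfl
  have hmc : (m * c) ≠ 0 := by positivity
  have hp2w : p t 2 < w := by nlinarith [hw2, hwpos, sq_nonneg (p t 0), sq_nonneg (p t 1), sq_nonneg (w - p t 2), mul_pos hm hc]
  have hσpos : 0 < c - c / w * p t 2 := by
    have hwp : 0 < w - p t 2 := sub_pos.2 hp2w
    have : c - c / w * p t 2 = c * (w - p t 2) / w := by field_simp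
    rw [this]; positivity
  have hσne : (c - c / w * p t 2) ≠ 0 := ne_of_gt hσpos
  have hA : -(c * p t 2) + c * w ≠ 0 := by nlinarith [hp2w, hc]
  have hA' : c * w - c * p t 2 ≠ 0 := by nlinarith [hp2w, hc]
  -- component derivatives
  have hxi : ∀ i, HasDerivAt (fun τ => x τ i) (c / w * p t i) t := by
    intro i
    simpa [Pi.smul_apply, smul_eq_mul] using hasDerivAt_pi.1 hx i
  have hpi : ∀ i, HasDerivAt (fun τ => p τ i)
      ((q • E t (x t) + cross (w⁻¹ • p t) (q • B t (x t))) i) t :=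
    fun i => hasDerivAt_pi.1 hp i
  -- strict derivative of ξ(τ) = cτ - x τ 2
  have hx2s : HasStrictDerivAt (fun τ => x τ 2) (c / w * p t 2) t := by
    have h := ((contDiff_pi.1 hxC 2).contDiffAt (x := t)).hasStrictDerivAt one_ne_zero
    rwa [(hxi 2).deriv] at h
  have hξs : HasStrictDerivAt (fun τ => c * τ - x τ 2) (c - c / w * p t 2) t := by
    have h := ((hasStrictDerivAt_id t).const_mul c).sub hx2s
    simp at h; exact h
  -- tinv is differentiable at ξ0
  have htinvd : HasDerivAt tinv (c - c / w * p t 2)⁻¹ ξ0 := by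
    have h := hξs.to_local_left_inverse hσne (g := tinv) (Filter.Eventually.of_forall fun τ => htinv τ)
    exact h.hasDerivAt
  have htt : tinv ξ0 = t := htinv t
  have comp : ∀ {F : ℝ → ℝ} {D : ℝ}, HasDerivAt F D t →
      HasDerivAt (fun η => F (tinv η)) (D * (c - c / w * p t 2)⁻¹) ξ0 := by
    intro F D hF
    have hF' : HasDerivAt F D (tinv ξ0) := by rw [htt]; exact hF
    exact hF'.comp ξ0 htinvd
  have hxt : xhat x tinv ξ0 = x t := by rw [xhat, htt]
  have hxd : ∀ i, HasDerivAt (fun η => xhat x tinv η i)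
      (c / w * p t i * (c - c / w * p t 2)⁻¹) ξ0 := by
    intro i; exact comp (hxi i)
  have hud : ∀ i, HasDerivAt (fun η => uhat m c p tinv η i)
      ((m * c)⁻¹ * (q • E t (x t) + cross (w⁻¹ • p t) (q • B t (x t))) i
        * (c - c / w * p t 2)⁻¹) ξ0 := by
    intro i
    have h := comp ((hpi i).const_mul (m * c)⁻¹)
    simpa [uhat, Pi.smul_apply, smul_eq_mul] using h
  constructor
  · rintro a (rfl | rfl)
    · rw [(hxd 2).deriv, hxt]
      simp only [cross, Matrix.cons_val_zero, Matrix.cons_val_one, Matrix.head_cons,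
        Matrix.cons_val_two, Matrix.tail_cons]
      rw [(hxd 1).deriv, (hxd 2).deriv]
      convert hud 0 using 1
      simp only [hE, hB, cross, Pi.add_apply, Pi.smul_apply, smul_eq_mul, hepsz,
        Matrix.cons_val_zero, Matrix.cons_val_one, Matrix.head_cons,
        Matrix.cons_val_two, Matrix.tail_cons, ← hξ0]
      field_simp [hA, hA', show -p t 2 + w ≠ 0 by linarith [hp2w], sub_ne_zero.2 hp2w.ne']
      ring
    · rw [(hxd 2).deriv, hxt]
      simp only [cross, Matrix.cons_val_zero, Matrix.cons_val_one, Matrix.head_cons,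
        Matrix.cons_val_two, Matrix.tail_cons]
      rw [(hxd 0).deriv, (hxd 2).deriv]
      convert hud 1 using 1
      simp only [hE, hB, cross, Pi.add_apply, Pi.smul_apply, smul_eq_mul, hepsz,
        Matrix.cons_val_zero, Matrix.cons_val_one, Matrix.head_cons,
        Matrix.cons_val_two, Matrix.tail_cons, ← hξ0]
      field_simp [hA, hA', show -p t 2 + w ≠ 0 by linarith [hp2w], sub_ne_zero.2 hp2w.ne']
      ring
  · -- derivative of shat
    have hui : ∀ i, HasDerivAt (fun τ => (m * c)⁻¹ * p τ i)
        ((m * c)⁻¹ * (q • E t (x t) + cross (w⁻¹ • p t) (q • B t (x t))) i) t :=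
      fun i => (hpi i).const_mul _
    have hinner : HasDerivAt
        (fun τ => 1 + (((m * c)⁻¹ * p τ 0) ^ 2 + ((m * c)⁻¹ * p τ 1) ^ 2
          + ((m * c)⁻¹ * p τ 2) ^ 2))
        ((2 : ℕ) * ((m * c)⁻¹ * p t 0) ^ 1
            * ((m * c)⁻¹ * (q • E t (x t) + cross (w⁻¹ • p t) (q • B t (x t))) 0)
          + (2 : ℕ) * ((m * c)⁻¹ * p t 1) ^ 1
            * ((m * c)⁻¹ * (q • E t (x t) + cross (w⁻¹ • p t) (q • B t (x t))) 1)
          + (2 : ℕ) * ((m * c)⁻¹ * p t 2) ^ 1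
            * ((m * c)⁻¹ * (q • E t (x t) + cross (w⁻¹ • p t) (q • B t (x t))) 2)) t := by
      exact ((((hui 0).pow 2).add ((hui 1).pow 2)).add ((hui 2).pow 2)).const_add 1
    have hinval : 1 + (((m * c)⁻¹ * p t 0) ^ 2 + ((m * c)⁻¹ * p t 1) ^ 2
        + ((m * c)⁻¹ * p t 2) ^ 2) = (w / (m * c)) ^ 2 := by
      field_simp
      linarith [hw2]
    have hinne : 1 + (((m * c)⁻¹ * p t 0) ^ 2 + ((m * c)⁻¹ * p t 1) ^ 2
        + ((m * c)⁻¹ * p t 2) ^ 2) ≠ 0 := by positivity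
    have hG := hinner.sqrt hinne
    rw [hinval, Real.sqrt_sq (by positivity)] at hG
    have hG2 := comp hG
    have hu2 := comp (hui 2)
    have hkey : HasDerivAt (fun η =>
        Real.sqrt (1 + (((m * c)⁻¹ * p (tinv η) 0) ^ 2 + ((m * c)⁻¹ * p (tinv η) 1) ^ 2
          + ((m * c)⁻¹ * p (tinv η) 2) ^ 2)) - (m * c)⁻¹ * p (tinv η) 2) _ ξ0 :=
      hG2.fun_sub hu2
    have hfun : shat m c p tinv = fun η =>
        Real.sqrt (1 + (((m * c)⁻¹ * p (tinv η) 0) ^ 2 + ((m * c)⁻¹ * p (tinv η) 1) ^ 2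
          + ((m * c)⁻¹ * p (tinv η) 2) ^ 2)) - (m * c)⁻¹ * p (tinv η) 2 := by
      funext η
      simp [shat, gammahat, uhat, sq3, Pi.smul_apply, smul_eq_mul]
    rw [(hxd 0).deriv, (hxd 1).deriv, hxt, hfun]
    convert hkey using 1
    simp only [hE, hB, cross, Pi.add_apply, Pi.smul_apply, smul_eq_mul, hepsz,
      Matrix.cons_val_zero, Matrix.cons_val_one, Matrix.head_cons,
      Matrix.cons_val_two, Matrix.tail_cons, ← hξ0]
    field_simp [hA, hA', sub_ne_zero.2 hp2w.ne']
    ring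
end
end

section
/- Let the electromagnetic field have the split form E(t,x) = ε⊥(ct − x³) + E_s(x), B(t,x) = k × ε⊥(ct − x³) + B_s(x) with ε⊥ : ℝ → ℝ³ continuous with vanishing third component, B_s continuous, and E_s = −∇A_s⁰ for a C¹ function A_s⁰ : ℝ³ → ℝ. Let (x,p) be a C¹ solution of the Lorentz equations, with ξ-parametrized variables x̂, γ̂. Then the energy Ĥ(ξ) := mc²γ̂(ξ) + qA_s⁰(x̂(ξ)) satisfies Ĥ'(ξ) = q·[(x̂¹)'(ξ)·ε¹(ξ) + (x̂²)'(ξ)·ε²(ξ)] for all ξ in the range of ξ(t) = ct − x³(t). In particular, on any interval where ε⊥ vanishes identically, Ĥ is constant. -/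
noncomputable section

lemma sq3_nonneg (v : Fin 3 → ℝ) : 0 ≤ sq3 v := by unfold sq3; positivity

lemma fin3_decomp (v : Fin 3 → ℝ) :
    v = v 0 • (Pi.single 0 1 : Fin 3 → ℝ) + v 1 • (Pi.single 1 1 : Fin 3 → ℝ)
      + v 2 • (Pi.single 2 1 : Fin 3 → ℝ) := by
  funext i; fin_cases i <;> simp

lemma clm_fin3 (φ : (Fin 3 → ℝ) →L[ℝ] ℝ) (v : Fin 3 → ℝ) :
    φ v = v 0 * φ (Pi.single 0 1) + v 1 * φ (Pi.single 1 1) + v 2 * φ (Pi.single 2 1) := by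
  conv_lhs => rw [fin3_decomp v]
  simp [map_add]

lemma cross_apply0 (a b : Fin 3 → ℝ) : cross a b 0 = a 1 * b 2 - a 2 * b 1 := rfl
lemma cross_apply1 (a b : Fin 3 → ℝ) : cross a b 1 = a 2 * b 0 - a 0 * b 2 := rfl
lemma cross_apply2 (a b : Fin 3 → ℝ) : cross a b 2 = a 0 * b 1 - a 1 * b 0 := rfl
lemma kval0 : (![0,0,1] : Fin 3 → ℝ) 0 = 0 := rfl
lemma kval1 : (![0,0,1] : Fin 3 → ℝ) 1 = 0 := rfl
lemma kval2 : (![0,0,1] : Fin 3 → ℝ) 2 = 1 := rfl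

set_option maxHeartbeats 2000000 in
/-- For the split field `E = ε⊥(ct−z) + E_s`, `B = k×ε⊥(ct−z) + B_s`
with electrostatic `E_s = −∇A_s⁰`, the energy `Ĥ(ξ) = mc²γ̂(ξ) + qA_s⁰(x̂(ξ))`
satisfies `Ĥ'(ξ) = q[(x̂¹)'ε¹(ξ) + (x̂²)'ε²(ξ)]`; in particular `Ĥ` is constant
on any interval where `ε⊥` vanishes identically. -/
theorem stmt_5 (m c q : ℝ) (hm : 0 < m) (hc : 0 < c)
    (eps : ℝ → Fin 3 → ℝ) (heps : Continuous eps) (hepsz : ∀ ξ : ℝ, eps ξ 2 = 0)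
    (As0 : (Fin 3 → ℝ) → ℝ) (hAs0 : ContDiff ℝ 1 As0)
    (Bs : (Fin 3 → ℝ) → Fin 3 → ℝ) (hBs : Continuous Bs)
    (E B : ℝ → (Fin 3 → ℝ) → (Fin 3 → ℝ))
    (hE : ∀ (t : ℝ) (y : Fin 3 → ℝ),
      E t y = eps (c * t - y 2) + fun i : Fin 3 => -(fderiv ℝ As0 y (Pi.single i 1)))
    (hB : ∀ (t : ℝ) (y : Fin 3 → ℝ),
      B t y = cross ![0, 0, 1] (eps (c * t - y 2)) + Bs y)
    (x p : ℝ → Fin 3 → ℝ) (hxC : ContDiff ℝ 1 x) (hpC : ContDiff ℝ 1 p)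
    (hsol : IsLorentzSolution m c q E B x p)
    (tinv : ℝ → ℝ) (htinv : ∀ t : ℝ, tinv (c * t - x t 2) = t) :
    (∀ t : ℝ,
      HasDerivAt (fun ξ : ℝ => m * c ^ 2 * gammahat m c p tinv ξ + q * As0 (xhat x tinv ξ))
        (q * (deriv (fun η : ℝ => xhat x tinv η 0) (c * t - x t 2) *
                eps (c * t - x t 2) 0 +
              deriv (fun η : ℝ => xhat x tinv η 1) (c * t - x t 2) *
                eps (c * t - x t 2) 1))
        (c * t - x t 2)) ∧
    ∀ t₁ t₂ : ℝ,
      (∀ ζ ∈ Set.uIcc (c * t₁ - x t₁ 2) (c * t₂ - x t₂ 2), eps ζ = 0) →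
      m * c ^ 2 * gammahat m c p tinv (c * t₁ - x t₁ 2) +
          q * As0 (xhat x tinv (c * t₁ - x t₁ 2)) =
        m * c ^ 2 * gammahat m c p tinv (c * t₂ - x t₂ 2) +
          q * As0 (xhat x tinv (c * t₂ - x t₂ 2)) := by
  have hmc2 : (0:ℝ) < m ^ 2 * c ^ 2 := by positivity
  have hrpos : ∀ t : ℝ, 0 < m ^ 2 * c ^ 2 + sq3 (p t) := fun t => by
    have h := sq3_nonneg (p t); linarith
  have hrt : ∀ t : ℝ, 0 < Real.sqrt (m ^ 2 * c ^ 2 + sq3 (p t)) :=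
    fun t => Real.sqrt_pos.mpr (hrpos t)
  -- component derivatives of x
  have hxc : ∀ (t : ℝ) (i : Fin 3), HasDerivAt (fun s => x s i)
      (c / Real.sqrt (m ^ 2 * c ^ 2 + sq3 (p t)) * p t i) t := by
    intro t i
    have h := hasDerivAt_pi.mp (hsol t).2 i
    simpa using h
  -- p t 2 < r t
  have hp2lt : ∀ t : ℝ, p t 2 < Real.sqrt (m ^ 2 * c ^ 2 + sq3 (p t)) := by
    intro t
    have h3 : (p t 2) ^ 2 < m ^ 2 * c ^ 2 + sq3 (p t) := by
      unfold sq3; nlinarith [sq_nonneg (p t 0), sq_nonneg (p t 1)]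
    have h4 := Real.sqrt_lt_sqrt (sq_nonneg (p t 2)) h3
    calc p t 2 ≤ |p t 2| := le_abs_self _
      _ = Real.sqrt ((p t 2) ^ 2) := (Real.sqrt_sq_eq_abs _).symm
      _ < _ := h4
  -- ξ' positive
  have hvpos : ∀ t : ℝ, 0 < c - c / Real.sqrt (m ^ 2 * c ^ 2 + sq3 (p t)) * p t 2 := by
    intro t
    have hr := hrt t
    have h : c / Real.sqrt (m ^ 2 * c ^ 2 + sq3 (p t)) * p t 2 < c := by
      rw [div_mul_eq_mul_div, div_lt_iff₀ hr]
      nlinarith [hp2lt t]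
    linarith
  have hξd : ∀ t : ℝ, HasDerivAt (fun s => c * s - x s 2)
      (c - c / Real.sqrt (m ^ 2 * c ^ 2 + sq3 (p t)) * p t 2) t := by
    intro t
    have h1 : HasDerivAt (fun s : ℝ => c * s) c t := by
      simpa using (hasDerivAt_id t).const_mul c
    exact h1.sub (hxc t 2)
  have hmono : StrictMono (fun s : ℝ => c * s - x s 2) :=
    strictMono_of_hasDerivAt_pos hξd hvpos
  have hcont : Continuous (fun s : ℝ => c * s - x s 2) :=
    (continuous_const.mul continuous_id).sub ((continuous_apply 2).comp hxC.continuous)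
  -- local solvability
  have hsurj : ∀ (t₀ ε : ℝ), 0 < ε → ∀ y : ℝ, c * (t₀ - ε) - x (t₀ - ε) 2 < y →
      y < c * (t₀ + ε) - x (t₀ + ε) 2 → ∃ s, |s - t₀| ≤ ε ∧ c * s - x s 2 = y := by
    intro t₀ ε hε y h1 h2
    have hI := intermediate_value_Icc (by linarith : t₀ - ε ≤ t₀ + ε) hcont.continuousOn
    obtain ⟨s, hs, hsy⟩ := hI ⟨le_of_lt h1, le_of_lt h2⟩
    exact ⟨s, abs_le.mpr ⟨by linarith [hs.1], by linarith [hs.2]⟩, hsy⟩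
  -- continuity of tinv at points of the range
  have htc : ∀ t₀ : ℝ, ContinuousAt tinv (c * t₀ - x t₀ 2) := by
    intro t₀
    rw [Metric.continuousAt_iff]
    intro ε hε
    have hε2 : 0 < ε / 2 := by linarith
    have ha : c * (t₀ - ε / 2) - x (t₀ - ε / 2) 2 < c * t₀ - x t₀ 2 := hmono (by linarith)
    have hb : c * t₀ - x t₀ 2 < c * (t₀ + ε / 2) - x (t₀ + ε / 2) 2 := hmono (by linarith)
    refine ⟨min ((c * t₀ - x t₀ 2) - (c * (t₀ - ε / 2) - x (t₀ - ε / 2) 2))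
        ((c * (t₀ + ε / 2) - x (t₀ + ε / 2) 2) - (c * t₀ - x t₀ 2)),
      lt_min (by linarith) (by linarith), ?_⟩
    intro y hy
    rw [Real.dist_eq] at hy
    have hmin1 := min_le_left ((c * t₀ - x t₀ 2) - (c * (t₀ - ε / 2) - x (t₀ - ε / 2) 2))
        ((c * (t₀ + ε / 2) - x (t₀ + ε / 2) 2) - (c * t₀ - x t₀ 2))
    have hmin2 := min_le_right ((c * t₀ - x t₀ 2) - (c * (t₀ - ε / 2) - x (t₀ - ε / 2) 2))
        ((c * (t₀ + ε / 2) - x (t₀ + ε / 2) 2) - (c * t₀ - x t₀ 2))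
    have habs := abs_lt.mp hy
    obtain ⟨s, hs, hsy⟩ := hsurj t₀ (ε / 2) hε2 y (by linarith [habs.1]) (by linarith [habs.2])
    have hty : tinv y = s := by rw [← hsy, htinv s]
    rw [Real.dist_eq, hty, htinv t₀]
    have := abs_le.mp hs
    rw [abs_lt]
    constructor <;> linarith [this.1, this.2]
  -- local right-inverse property
  have hlocinv : ∀ t₀ : ℝ, ∀ᶠ y in nhds (c * t₀ - x t₀ 2),
      (fun s : ℝ => c * s - x s 2) (tinv y) = y := by
    intro t₀
    have ha : c * (t₀ - 1) - x (t₀ - 1) 2 < c * t₀ - x t₀ 2 := hmono (by linarith)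
    have hb : c * t₀ - x t₀ 2 < c * (t₀ + 1) - x (t₀ + 1) 2 := hmono (by linarith)
    filter_upwards [Ioo_mem_nhds ha hb] with y hy
    obtain ⟨s, -, hsy⟩ := hsurj t₀ 1 one_pos y hy.1 hy.2
    show c * tinv y - x (tinv y) 2 = y
    rw [← hsy, htinv s]
  -- derivative of tinv
  have htd : ∀ t₀ : ℝ, HasDerivAt tinv
      (c - c / Real.sqrt (m ^ 2 * c ^ 2 + sq3 (p t₀)) * p t₀ 2)⁻¹ (c * t₀ - x t₀ 2) := by
    intro t₀
    have hfd : HasDerivAt (fun s : ℝ => c * s - x s 2)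
        (c - c / Real.sqrt (m ^ 2 * c ^ 2 + sq3 (p t₀)) * p t₀ 2) (tinv (c * t₀ - x t₀ 2)) := by
      rw [htinv t₀]; exact hξd t₀
    exact HasDerivAt.of_local_left_inverse (htc t₀) hfd (ne_of_gt (hvpos t₀)) (hlocinv t₀)
  -- γ̂ in terms of p
  have hgam : ∀ ξ : ℝ, m * c ^ 2 * gammahat m c p tinv ξ
      = c * Real.sqrt (m ^ 2 * c ^ 2 + sq3 (p (tinv ξ))) := by
    intro ξ
    unfold gammahat uhat
    have h1 : m ^ 2 * c ^ 2 + sq3 (p (tinv ξ))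
        = (m * c) ^ 2 * (1 + sq3 ((m * c)⁻¹ • p (tinv ξ))) := by
      simp only [sq3, Pi.smul_apply, smul_eq_mul]
      field_simp
    rw [h1, Real.sqrt_mul (by positivity), Real.sqrt_sq (by positivity)]
    ring
  -- main derivative formula
  have main : ∀ t₀ : ℝ,
      HasDerivAt (fun ξ : ℝ => m * c ^ 2 * gammahat m c p tinv ξ + q * As0 (xhat x tinv ξ))
        (q * (deriv (fun η : ℝ => xhat x tinv η 0) (c * t₀ - x t₀ 2) *
                eps (c * t₀ - x t₀ 2) 0 +
              deriv (fun η : ℝ => xhat x tinv η 1) (c * t₀ - x t₀ 2) *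
                eps (c * t₀ - x t₀ 2) 1))
        (c * t₀ - x t₀ 2) := by
    intro t₀
    have hp' := (hsol t₀).1
    rw [hE t₀ (x t₀), hB t₀ (x t₀)] at hp'
    have hpc0 := hasDerivAt_pi.mp hp' 0
    have hpc1 := hasDerivAt_pi.mp hp' 1
    have hpc2 := hasDerivAt_pi.mp hp' 2
    -- derivative of x̂ components
    have hxhat : ∀ i : Fin 3, HasDerivAt (fun η : ℝ => xhat x tinv η i)
        (c / Real.sqrt (m ^ 2 * c ^ 2 + sq3 (p t₀)) * p t₀ i *
          (c - c / Real.sqrt (m ^ 2 * c ^ 2 + sq3 (p t₀)) * p t₀ 2)⁻¹)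
        (c * t₀ - x t₀ 2) := by
      intro i
      have h1 : HasDerivAt (fun s => x s i)
          (c / Real.sqrt (m ^ 2 * c ^ 2 + sq3 (p t₀)) * p t₀ i) (tinv (c * t₀ - x t₀ 2)) := by
        rw [htinv t₀]; exact hxc t₀ i
      have h2 := h1.comp (c * t₀ - x t₀ 2) (htd t₀)
      exact h2
    have hderiv0 := (hxhat 0).deriv
    have hderiv1 := (hxhat 1).deriv
    -- t-derivative of the energy
    have hsq := (((hpc0.pow 2).add (hpc1.pow 2)).add (hpc2.pow 2)).const_add (m ^ 2 * c ^ 2)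
    have hfun : (fun s => m ^ 2 * c ^ 2 + (p s 0 ^ 2 + p s 1 ^ 2 + p s 2 ^ 2))
        = (fun s => m ^ 2 * c ^ 2 + sq3 (p s)) := by
      funext s; simp [sq3]
    simp only [Pi.add_apply, Pi.pow_apply] at hsq
    rw [hfun] at hsq
    have hsqrt := hsq.sqrt (ne_of_gt (hrpos t₀))
    have hAx : HasDerivAt (fun s => As0 (x s))
        (fderiv ℝ As0 (x t₀) ((c / Real.sqrt (m ^ 2 * c ^ 2 + sq3 (p t₀))) • p t₀)) t₀ :=
      ((hAs0.differentiable one_ne_zero) (x t₀)).hasFDerivAt.comp_hasDerivAt t₀ (hsol t₀).2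
    have hH := (hsqrt.const_mul c).add (hAx.const_mul q)
    have hH' := (htinv t₀).symm ▸ hH
    have hcomp := HasDerivAt.comp (c * t₀ - x t₀ 2) hH' (htd t₀)
    have hfun2 : (fun ξ : ℝ => m * c ^ 2 * gammahat m c p tinv ξ + q * As0 (xhat x tinv ξ))
        = (fun s => c * Real.sqrt (m ^ 2 * c ^ 2 + sq3 (p s)) + q * As0 (x s)) ∘ tinv := by
      funext ξ; simp only [Function.comp, xhat]; rw [hgam ξ]
    rw [hfun2, hderiv0, hderiv1]
    refine hcomp.congr_deriv ?_
    symm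
    rw [htinv t₀]
    rw [clm_fin3 (fderiv ℝ As0 (x t₀))]
    simp only [Pi.add_apply, Pi.smul_apply, smul_eq_mul, cross_apply0, cross_apply1,
      cross_apply2, kval0, kval1, kval2, hepsz, Pi.neg_apply]
    have hrne := ne_of_gt (hrt t₀)
    have hwne := ne_of_gt (hvpos t₀)
    push_cast
    generalize hsg : Real.sqrt (m ^ 2 * c ^ 2 + sq3 (p t₀)) = s
    rw [hsg] at hrne hwne
    have hcs : c * s - c * p t₀ 2 ≠ 0 := by
      intro h
      apply hwne
      field_simp [hrne]
      linarith
    field_simp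
    ring_nf
  refine ⟨main, ?_⟩
  intro t₁ t₂ h0
  set F : ℝ → ℝ := fun ξ => m * c ^ 2 * gammahat m c p tinv ξ + q * As0 (xhat x tinv ξ) with hF
  show F (c * t₁ - x t₁ 2) = F (c * t₂ - x t₂ 2)
  have hzero : ∀ ζ ∈ Set.uIcc (c * t₁ - x t₁ 2) (c * t₂ - x t₂ 2), HasDerivAt F 0 ζ := by
    intro ζ hζ
    have hsub : Set.uIcc (c * t₁ - x t₁ 2) (c * t₂ - x t₂ 2)
        ⊆ (fun s : ℝ => c * s - x s 2) '' Set.uIcc t₁ t₂ := by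
      simpa using intermediate_value_uIcc hcont.continuousOn
    obtain ⟨s, -, hs⟩ := hsub hζ
    have hs' : c * s - x s 2 = ζ := hs
    have h := main s
    rw [hs'] at h
    simpa [h0 ζ hζ] using h
  have key : ∀ a b : ℝ, a ≤ b → (∀ ζ ∈ Set.Icc a b, HasDerivAt F 0 ζ) → F a = F b := by
    intro a b hab hz
    rcases eq_or_lt_of_le hab with rfl | hab
    · rfl
    obtain ⟨ζ, hζ, hval⟩ := exists_hasDerivAt_eq_slope F (fun _ => (0:ℝ)) hab
      (fun ζ hζ => (hz ζ hζ).continuousAt.continuousWithinAt)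
      (fun ζ hζ => hz ζ (Set.mem_Icc_of_Ioo hζ))
    have hb : b - a ≠ 0 := sub_ne_zero.mpr (ne_of_gt hab)
    field_simp at hval
    linarith [hval]
  rcases le_total (c * t₁ - x t₁ 2) (c * t₂ - x t₂ 2) with hab | hab
  · exact key _ _ hab (fun ζ hζ => hzero ζ (by rwa [Set.uIcc_of_le hab]))
  · exact (key _ _ hab (fun ζ hζ => hzero ζ (by rwa [Set.uIcc_of_ge hab]))).symm
end
end

section
/- Let the electromagnetic field have the split form E(t,x) = ε⊥(ct − x³) + E_s, B(t,x) = k × ε⊥(ct − x³) + B_s, where E_s, B_s ∈ ℝ³ are constant vectors and ε⊥ : ℝ → ℝ³ is continuous, integrable, and has vanishing third component; set α⊥(ξ) := −∫_{−∞}^{ξ} ε⊥(ζ)dζ. Let (x,p) be a C¹ solution of the Lorentz equations with ξ-parametrized variables x̂, û, ŝ. Then the following three functions of ξ are constant on the range of ξ(t) = ct − x³(t): ûᵃ(ξ) − (q/(mc²))·[−αᵃ(ξ) + (ξ + x̂³(ξ))·E_sᵃ + (x̂(ξ) × B_s)ᵃ] for a = 1,2, and ŝ(ξ) + (q/(mc²))·[ξ·E_s³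 − x̂¹(ξ)E_s¹ − x̂²(ξ)E_s² + x̂¹(ξ)B_s² − x̂²(ξ)B_s¹]. -/
noncomputable section

open MeasureTheory

/-- FTC for integrals over `Iic`. -/
lemma hasDerivAt_integral_Iic (g : ℝ → ℝ) (hg : Continuous g)
    (hgi : Integrable g) (r : ℝ) :
    HasDerivAt (fun s => ∫ ζ in Set.Iic s, g ζ) (g r) r := by
  have key : (fun s => ∫ ζ in Set.Iic s, g ζ)
      = fun s => (∫ ζ in Set.Iic (0:ℝ), g ζ) + ∫ ζ in (0:ℝ)..s, g ζ := by
    funext s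
    have := intervalIntegral.integral_Iic_sub_Iic (hgi.integrableOn) (hgi.integrableOn)
      (μ := volume) (a := (0:ℝ)) (b := s)
    linarith
  rw [key]
  exact (intervalIntegral.integral_hasDerivAt_right hgi.intervalIntegrable
    (hg.stronglyMeasurable.stronglyMeasurableAtFilter) hg.continuousAt).const_add _

set_option maxHeartbeats 1000000 in
/-- For `E = ε⊥(ct−z) + E_s`, `B = k×ε⊥(ct−z) + B_s` with
*constant* static fields and `α⊥(ξ) = −∫_{−∞}^ξ ε⊥`, the quantities
`ûᵃ − (q/(mc²))[−αᵃ + (ξ+x̂³)E_sᵃ + (x̂×B_s)ᵃ]` (a = 1,2) and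
`ŝ + (q/(mc²))[ξE_s³ − x̂¹E_s¹ − x̂²E_s² + x̂¹B_s² − x̂²B_s¹]`
are constant along the motion. -/
theorem stmt_6 (m c q : ℝ) (hm : 0 < m) (hc : 0 < c)
    (eps : ℝ → Fin 3 → ℝ) (heps : Continuous eps) (hepsi : Integrable eps)
    (hepsz : ∀ ξ : ℝ, eps ξ 2 = 0)
    (Es Bs : Fin 3 → ℝ)
    (E B : ℝ → (Fin 3 → ℝ) → (Fin 3 → ℝ))
    (hE : ∀ (t : ℝ) (y : Fin 3 → ℝ), E t y = eps (c * t - y 2) + Es)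
    (hB : ∀ (t : ℝ) (y : Fin 3 → ℝ),
      B t y = cross ![0, 0, 1] (eps (c * t - y 2)) + Bs)
    (x p : ℝ → Fin 3 → ℝ) (hxC : ContDiff ℝ 1 x) (hpC : ContDiff ℝ 1 p)
    (hsol : IsLorentzSolution m c q E B x p)
    (tinv : ℝ → ℝ) (htinv : ∀ t : ℝ, tinv (c * t - x t 2) = t)
    (alpha : ℝ → Fin 3 → ℝ)
    (halpha : ∀ ξ : ℝ, alpha ξ = -∫ ζ in Set.Iic ξ, eps ζ) :
    ∀ t₁ t₂ : ℝ,
      (∀ a : Fin 3, a = 0 ∨ a = 1 →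
        uhat m c p tinv (c * t₁ - x t₁ 2) a -
          (q / (m * c ^ 2)) *
            (-alpha (c * t₁ - x t₁ 2) a +
              ((c * t₁ - x t₁ 2) + xhat x tinv (c * t₁ - x t₁ 2) 2) * Es a +
              cross (xhat x tinv (c * t₁ - x t₁ 2)) Bs a) =
        uhat m c p tinv (c * t₂ - x t₂ 2) a -
          (q / (m * c ^ 2)) *
            (-alpha (c * t₂ - x t₂ 2) a +
              ((c * t₂ - x t₂ 2) + xhat x tinv (c * t₂ - x t₂ 2) 2) * Es a +
              cross (xhat x tinv (c * t₂ - x t₂ 2)) Bs a)) ∧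
      shat m c p tinv (c * t₁ - x t₁ 2) +
          (q / (m * c ^ 2)) *
            ((c * t₁ - x t₁ 2) * Es 2 -
              xhat x tinv (c * t₁ - x t₁ 2) 0 * Es 0 -
              xhat x tinv (c * t₁ - x t₁ 2) 1 * Es 1 +
              xhat x tinv (c * t₁ - x t₁ 2) 0 * Bs 1 -
              xhat x tinv (c * t₁ - x t₁ 2) 1 * Bs 0) =
        shat m c p tinv (c * t₂ - x t₂ 2) +
          (q / (m * c ^ 2)) *
            ((c * t₂ - x t₂ 2) * Es 2 -
              xhat x tinv (c * t₂ - x t₂ 2) 0 * Es 0 -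
              xhat x tinv (c * t₂ - x t₂ 2) 1 * Es 1 +
              xhat x tinv (c * t₂ - x t₂ 2) 0 * Bs 1 -
              xhat x tinv (c * t₂ - x t₂ 2) 1 * Bs 0) := by
  have hmc : (0:ℝ) < m * c := mul_pos hm hc
  set W : ℝ → ℝ := fun t => Real.sqrt (m ^ 2 * c ^ 2 + sq3 (p t)) with hWdef
  have hsq3 : ∀ v : Fin 3 → ℝ, 0 ≤ sq3 v := by
    intro v; unfold sq3; positivity
  have hWpos : ∀ t, 0 < W t := by
    intro t
    apply Real.sqrt_pos.2
    have h1 : 0 < m ^ 2 * c ^ 2 := by positivity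
    linarith [hsq3 (p t)]
  -- component derivatives of x
  have hx' : ∀ (t : ℝ) (a : Fin 3), HasDerivAt (fun t => x t a) (c / W t * p t a) t := by
    intro t a
    have h := hasDerivAt_pi.1 (hsol t).2 a
    simpa using h
  -- derivative of ξ(t) = c t - x³(t)
  have hxi : ∀ t : ℝ, HasDerivAt (fun t => c * t - x t 2) (c - c / W t * p t 2) t := by
    intro t
    exact (((hasDerivAt_id t).const_mul c).sub (hx' t 2)).congr_deriv (by simp)
  -- component derivatives of p, with the fields substituted
  have hp0 : ∀ t : ℝ, HasDerivAt (fun t => p t 0)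
      (q * (eps (c * t - x t 2) 0 + Es 0)
        + ((W t)⁻¹ * p t 1 * (q * Bs 2)
           - (W t)⁻¹ * p t 2 * (q * (eps (c * t - x t 2) 0 + Bs 1)))) t := by
    intro t
    have h := hasDerivAt_pi.1 (hsol t).1 0
    refine h.congr_deriv (Eq.symm ?_)
    simp [hE, hB, cross, hepsz, Matrix.vecHead, Matrix.vecTail, hWdef]
    try ring
  have hp1 : ∀ t : ℝ, HasDerivAt (fun t => p t 1)
      (q * (eps (c * t - x t 2) 1 + Es 1)
        + ((W t)⁻¹ * p t 2 * (q * (-(eps (c * t - x t 2) 1) + Bs 0))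
           - (W t)⁻¹ * p t 0 * (q * Bs 2))) t := by
    intro t
    have h := hasDerivAt_pi.1 (hsol t).1 1
    refine h.congr_deriv (Eq.symm ?_)
    simp [hE, hB, cross, hepsz, Matrix.vecHead, Matrix.vecTail, hWdef]
    try ring
  have hp2 : ∀ t : ℝ, HasDerivAt (fun t => p t 2)
      (q * Es 2
        + ((W t)⁻¹ * p t 0 * (q * (eps (c * t - x t 2) 0 + Bs 1))
           - (W t)⁻¹ * p t 1 * (q * (-(eps (c * t - x t 2) 1) + Bs 0)))) t := by
    intro t
    have h := hasDerivAt_pi.1 (hsol t).1 2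
    refine h.congr_deriv (Eq.symm ?_)
    simp [hE, hB, cross, hepsz, Matrix.vecHead, Matrix.vecTail, hWdef]
    try ring
  -- derivative of α(ξ(t)) components
  have hIa : ∀ (a : Fin 3) (t : ℝ), HasDerivAt (fun t => alpha (c * t - x t 2) a)
      (-(eps (c * t - x t 2) a) * (c - c / W t * p t 2)) t := by
    intro a t
    have hcont : Continuous fun ζ => eps ζ a := (continuous_apply a).comp heps
    have hint : Integrable fun ζ => eps ζ a :=
      (ContinuousLinearMap.proj (R := ℝ) (φ := fun _ : Fin 3 => ℝ) a).integrable_comp hepsi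
    have halph : (fun t => alpha (c * t - x t 2) a)
        = fun t => -(∫ ζ in Set.Iic (c * t - x t 2), eps ζ a) := by
      funext s
      rw [halpha]
      simp only [Pi.neg_apply, neg_inj]
      exact ((ContinuousLinearMap.proj (R := ℝ) (φ := fun _ : Fin 3 => ℝ) a).integral_comp_comm
        hepsi.integrableOn).symm
    rw [halph]
    have h := ((hasDerivAt_integral_Iic _ hcont hint (c * t - x t 2)).comp t (hxi t)).neg
    exact h.congr_deriv (by ring)
  -- the perpendicular conservation laws
  have key0 : ∀ t : ℝ, HasDerivAt (fun t => (m * c)⁻¹ * p t 0 - q / (m * c ^ 2) *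
      (-alpha (c * t - x t 2) 0 + ((c * t - x t 2) + x t 2) * Es 0
        + (x t 1 * Bs 2 - x t 2 * Bs 1))) 0 t := by
    intro t
    have hD := ((hp0 t).const_mul (m * c)⁻¹).sub
      ((((hIa 0 t).neg.add (((hxi t).add (hx' t 2)).mul_const (Es 0))).add
        (((hx' t 1).mul_const (Bs 2)).sub ((hx' t 2).mul_const (Bs 1)))).const_mul
        (q / (m * c ^ 2)))
    refine hD.congr_deriv (Eq.symm ?_)
    have hW := (hWpos t).ne'
    field_simp
    ring
  have key1 : ∀ t : ℝ, HasDerivAt (fun t => (m * c)⁻¹ * p t 1 - q / (m * c ^ 2) *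
      (-alpha (c * t - x t 2) 1 + ((c * t - x t 2) + x t 2) * Es 1
        + (x t 2 * Bs 0 - x t 0 * Bs 2))) 0 t := by
    intro t
    have hD := ((hp1 t).const_mul (m * c)⁻¹).sub
      ((((hIa 1 t).neg.add (((hxi t).add (hx' t 2)).mul_const (Es 1))).add
        (((hx' t 2).mul_const (Bs 0)).sub ((hx' t 0).mul_const (Bs 2)))).const_mul
        (q / (m * c ^ 2)))
    refine hD.congr_deriv (Eq.symm ?_)
    have hW := (hWpos t).ne'
    field_simp
    ring
  -- the longitudinal conservation law
  have hWG : ∀ t, W t = m * c * Real.sqrt (1 + sq3 ((m * c)⁻¹ • p t)) := by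
    intro t
    rw [show m * c * Real.sqrt (1 + sq3 ((m * c)⁻¹ • p t))
        = Real.sqrt ((m * c) ^ 2 * (1 + sq3 ((m * c)⁻¹ • p t))) by
      rw [Real.sqrt_mul (sq_nonneg _), Real.sqrt_sq hmc.le]]
    rw [hWdef]
    congr 1
    simp only [sq3, Pi.smul_apply, smul_eq_mul]
    field_simp
  have hGpos : ∀ t, 0 < Real.sqrt (1 + sq3 ((m * c)⁻¹ • p t)) := by
    intro t
    apply Real.sqrt_pos.2
    linarith [hsq3 ((m * c)⁻¹ • p t)]
  have keys : ∀ t : ℝ, HasDerivAt (fun t =>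
      Real.sqrt (1 + sq3 ((m * c)⁻¹ • p t)) - (m * c)⁻¹ * p t 2 + q / (m * c ^ 2) *
        ((c * t - x t 2) * Es 2 - x t 0 * Es 0 - x t 1 * Es 1
          + x t 0 * Bs 1 - x t 1 * Bs 0)) 0 t := by
    intro t
    have hipos : (0:ℝ) < 1 + sq3 ((m * c)⁻¹ • p t) := by
      linarith [hsq3 ((m * c)⁻¹ • p t)]
    have hInner : HasDerivAt (fun t => 1 + sq3 ((m * c)⁻¹ • p t))
        (2 * ((m * c)⁻¹ * p t 0) ^ 1 * ((m * c)⁻¹ * (q * (eps (c * t - x t 2) 0 + Es 0)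
            + ((W t)⁻¹ * p t 1 * (q * Bs 2)
              - (W t)⁻¹ * p t 2 * (q * (eps (c * t - x t 2) 0 + Bs 1)))))
         + 2 * ((m * c)⁻¹ * p t 1) ^ 1 * ((m * c)⁻¹ * (q * (eps (c * t - x t 2) 1 + Es 1)
            + ((W t)⁻¹ * p t 2 * (q * (-(eps (c * t - x t 2) 1) + Bs 0))
              - (W t)⁻¹ * p t 0 * (q * Bs 2))))
         + 2 * ((m * c)⁻¹ * p t 2) ^ 1 * ((m * c)⁻¹ * (q * Es 2
            + ((W t)⁻¹ * p t 0 * (q * (eps (c * t - x t 2) 0 + Bs 1))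
              - (W t)⁻¹ * p t 1 * (q * (-(eps (c * t - x t 2) 1) + Bs 0)))))) t := by
      have h0 := (((hp0 t).const_mul (m * c)⁻¹).pow 2)
      have h1 := (((hp1 t).const_mul (m * c)⁻¹).pow 2)
      have h2 := (((hp2 t).const_mul (m * c)⁻¹).pow 2)
      have h := ((h0.add h1).add h2).const_add 1
      have hfun : (fun t => 1 + sq3 ((m * c)⁻¹ • p t))
          = fun t => 1 + (((m * c)⁻¹ * p t 0) ^ 2 + ((m * c)⁻¹ * p t 1) ^ 2
            + ((m * c)⁻¹ * p t 2) ^ 2) := by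
        funext s
        simp only [sq3, Pi.smul_apply, smul_eq_mul]
      rw [hfun]
      refine h.congr_deriv (Eq.symm ?_)
      rw [show (2:ℕ) - 1 = 1 from rfl]; push_cast; ring
    have hG := (Real.hasDerivAt_sqrt hipos.ne').comp t hInner
    have hD := (hG.sub ((hp2 t).const_mul (m * c)⁻¹)).add
      (((((((hxi t).mul_const (Es 2)).sub ((hx' t 0).mul_const (Es 0))).sub
        ((hx' t 1).mul_const (Es 1))).add ((hx' t 0).mul_const (Bs 1))).sub
        ((hx' t 1).mul_const (Bs 0))).const_mul (q / (m * c ^ 2)))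
    refine hD.congr_deriv (Eq.symm ?_)
    rw [hWG t]
    set G := Real.sqrt (1 + sq3 ((m * c)⁻¹ • p t)) with hGdef
    have hGne := (hGpos t).ne'
    field_simp [hGne, hm.ne', hc.ne']
    ring
  -- constancy from vanishing derivative
  have main : ∀ F : ℝ → ℝ, (∀ t, HasDerivAt F 0 t) → ∀ t₁ t₂ : ℝ, F t₁ = F t₂ := by
    intro F hF t₁ t₂
    exact is_const_of_deriv_eq_zero (fun t => (hF t).differentiableAt)
      (fun t => (hF t).deriv) t₁ t₂
  intro t₁ t₂
  constructor
  · rintro a (rfl | rfl)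
    · have h := main _ key0 t₁ t₂
      simpa [uhat, xhat, htinv, cross, Matrix.vecHead, Matrix.vecTail] using h
    · have h := main _ key1 t₁ t₂
      simpa [uhat, xhat, htinv, cross, Matrix.vecHead, Matrix.vecTail] using h
  · have h := main _ keys t₁ t₂
    simpa [shat, gammahat, uhat, xhat, htinv] using h
end
end

section
/- Let the electromagnetic field be E(t,x) = ε⊥(ct − x³) + E_s³(x³)·k, B(t,x) = k × ε⊥(ct − x³), where ε⊥ : ℝ → ℝ³ is continuous, integrable, with vanishing third component, E_s³ : ℝ → ℝ is continuous, and k = (0,0,1); set α⊥(ξ) := −∫_{−∞}^{ξ} ε⊥(ζ)dζ. Let (x,p) be a C¹ solution of the Lorentz equations with ξ-parametrized variables x̂, û, ŝ defined on J = range of ξ(t) = ct − x³(t), and fix ξ₀ ∈ J; define K⊥ := (mc²/q)·û⊥(ξ₀) + α⊥(ξ₀) (for q ≠ 0) and v̂(ξ) := ‖(q/(mc²))·(K⊥ − α⊥(ξ))‖². Then for all ξ ∈ J: ûᵃ(ξ) = (q/(mc²))·(Kᵃ − αᵃ(ξ)) for a = 1,2, and the pair (ẑ, ŝ) := (x̂³,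 ŝ) satisfies the one-degree-of-freedom system ẑ'(ξ) = (1 + v̂(ξ))/(2ŝ(ξ)²) − 1/2 and mc²·ŝ'(ξ) = −q·E_s³(ẑ(ξ)). -/
noncomputable section

open MeasureTheory

lemma alpha_hasDerivAt (eps : ℝ → Fin 3 → ℝ) (heps : Continuous eps)
    (hepsi : Integrable eps) (alpha : ℝ → Fin 3 → ℝ)
    (halpha : ∀ ξ : ℝ, alpha ξ = -∫ ζ in Set.Iic ξ, eps ζ) (a : Fin 3) (ξ : ℝ) :
    HasDerivAt (fun η => alpha η a) (-(eps ξ a)) ξ := by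
  set L := (ContinuousLinearMap.proj (R := ℝ) (φ := fun _ : Fin 3 => ℝ) a) with hL
  have hints : Integrable (fun ζ => eps ζ a) := L.integrable_comp hepsi
  have hcomp : ∀ η : ℝ, (∫ ζ in Set.Iic η, eps ζ) a = ∫ ζ in Set.Iic η, eps ζ a :=
    fun η => (L.integral_comp_comm hepsi.integrableOn).symm
  have hsplit : ∀ η : ℝ, (∫ ζ in Set.Iic η, eps ζ a)
      = (∫ ζ in Set.Iic (0:ℝ), eps ζ a) + ∫ ζ in (0:ℝ)..η, eps ζ a := by
    intro η
    have := intervalIntegral.integral_Iic_sub_Iic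
      (hints.integrableOn (s := Set.Iic (0:ℝ))) (hints.integrableOn (s := Set.Iic η))
    linarith
  have heq : (fun η => alpha η a)
      = fun η => -((∫ ζ in Set.Iic (0:ℝ), eps ζ a) + ∫ ζ in (0:ℝ)..η, eps ζ a) := by
    funext η; rw [halpha η]; simp only [Pi.neg_apply]; rw [hcomp, hsplit]
  rw [heq]
  have hca : Continuous fun ζ => eps ζ a := (continuous_apply a).comp heps
  exact ((hca.integral_hasStrictDerivAt 0 ξ).hasDerivAt.const_add _).neg

set_option maxHeartbeats 2000000 in
/-- For `E = ε⊥(ct−z) + E_s³(z)k`, `B = k×ε⊥(ct−z)`, with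
`α⊥(ξ) = −∫_{−∞}^ξ ε⊥`, `K⊥ = (mc²/q)û⊥(ξ₀) + α⊥(ξ₀)` and
`v̂(ξ) = ‖(q/(mc²))(K⊥ − α⊥(ξ))‖²`, one has `ûᵃ(ξ) = (q/(mc²))(Kᵃ − αᵃ(ξ))`
(a = 1,2) and the pair `(ẑ, ŝ) = (x̂³, ŝ)` satisfies the one-degree-of-freedom
system `ẑ' = (1+v̂)/(2ŝ²) − 1/2`, `mc²ŝ' = −qE_s³(ẑ)`. -/
theorem stmt_8 (m c q : ℝ) (hm : 0 < m) (hc : 0 < c) (hq : q ≠ 0)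
    (eps : ℝ → Fin 3 → ℝ) (heps : Continuous eps) (hepsi : Integrable eps)
    (hepsz : ∀ ξ : ℝ, eps ξ 2 = 0)
    (Es3 : ℝ → ℝ) (hEs3 : Continuous Es3)
    (E B : ℝ → (Fin 3 → ℝ) → (Fin 3 → ℝ))
    (hE : ∀ (t : ℝ) (y : Fin 3 → ℝ),
      E t y = eps (c * t - y 2) + Es3 (y 2) • ![0, 0, 1])
    (hB : ∀ (t : ℝ) (y : Fin 3 → ℝ),
      B t y = cross ![0, 0, 1] (eps (c * t - y 2)))
    (x p : ℝ → Fin 3 → ℝ) (hxC : ContDiff ℝ 1 x) (hpC : ContDiff ℝ 1 p)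
    (hsol : IsLorentzSolution m c q E B x p)
    (tinv : ℝ → ℝ) (htinv : ∀ t : ℝ, tinv (c * t - x t 2) = t)
    (alpha : ℝ → Fin 3 → ℝ)
    (halpha : ∀ ξ : ℝ, alpha ξ = -∫ ζ in Set.Iic ξ, eps ζ)
    (t₀ : ℝ) (K : Fin 3 → ℝ)
    (hK : ∀ a : Fin 3,
      K a = (m * c ^ 2 / q) * uhat m c p tinv (c * t₀ - x t₀ 2) a +
        alpha (c * t₀ - x t₀ 2) a)
    (v : ℝ → ℝ)
    (hv : ∀ ξ : ℝ,
      v ξ = ((q / (m * c ^ 2)) * (K 0 - alpha ξ 0)) ^ 2 +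
        ((q / (m * c ^ 2)) * (K 1 - alpha ξ 1)) ^ 2) :
    ∀ t : ℝ,
      (∀ a : Fin 3, a = 0 ∨ a = 1 →
        uhat m c p tinv (c * t - x t 2) a =
          (q / (m * c ^ 2)) * (K a - alpha (c * t - x t 2) a)) ∧
      HasDerivAt (fun η : ℝ => xhat x tinv η 2)
        ((1 + v (c * t - x t 2)) / (2 * (shat m c p tinv (c * t - x t 2)) ^ 2) - 1 / 2)
        (c * t - x t 2) ∧
      HasDerivAt (fun η : ℝ => m * c ^ 2 * shat m c p tinv η)
        (-(q * Es3 (xhat x tinv (c * t - x t 2) 2)))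
        (c * t - x t 2) := by
  obtain ⟨σ, hσdef⟩ : ∃ σ : ℝ → ℝ, ∀ s, σ s = Real.sqrt (m ^ 2 * c ^ 2 + sq3 (p s)) :=
    ⟨_, fun _ => rfl⟩
  obtain ⟨P, hPdef⟩ : ∃ P : ℝ → Fin 3 → ℝ,
      ∀ s, P s = q • E s (x s) + cross ((σ s)⁻¹ • p s) (q • B s (x s)) :=
    ⟨_, fun _ => rfl⟩
  have hsq3 : ∀ w : Fin 3 → ℝ, 0 ≤ sq3 w := fun w => by unfold sq3; positivity
  have hmc2 : (0:ℝ) < m ^ 2 * c ^ 2 := by positivity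
  have hin : ∀ s, 0 < m ^ 2 * c ^ 2 + sq3 (p s) := fun s => by
    have := hsq3 (p s); linarith
  have hσpos : ∀ s, 0 < σ s := fun s => by rw [hσdef]; exact Real.sqrt_pos.2 (hin s)
  have hσsq : ∀ s, σ s ^ 2 = m ^ 2 * c ^ 2 + sq3 (p s) := fun s => by
    rw [hσdef]; exact Real.sq_sqrt (hin s).le
  have hgap : ∀ s, p s 2 < σ s := by
    intro s
    have h3 : (p s 2) ^ 2 < m ^ 2 * c ^ 2 + sq3 (p s) := by
      unfold sq3; nlinarith [sq_nonneg (p s 0), sq_nonneg (p s 1), hmc2]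
    calc p s 2 ≤ |p s 2| := le_abs_self _
      _ = Real.sqrt ((p s 2) ^ 2) := (Real.sqrt_sq_eq_abs _).symm
      _ < σ s := by rw [hσdef]; exact Real.sqrt_lt_sqrt (sq_nonneg _) h3
  have hgap' : ∀ s, 0 < σ s - p s 2 := fun s => sub_pos.2 (hgap s)
  have hDpos : ∀ s, 0 < c - c / σ s * p s 2 := by
    intro s
    have h1 : c - c / σ s * p s 2 = c * (σ s - p s 2) / σ s := by
      have := (hσpos s).ne'
      field_simp
    rw [h1]; exact div_pos (mul_pos hc (hgap' s)) (hσpos s)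
  -- momentum component derivatives
  have hp' : ∀ (s : ℝ) (i : Fin 3), HasDerivAt (fun r => p r i) (P s i) s := by
    intro s i
    rw [hPdef, hσdef]
    exact hasDerivAt_pi.1 (hsol s).1 i
  -- component formulas
  have hPa : ∀ (a : Fin 3), a = 0 ∨ a = 1 → ∀ s,
      P s a = q * eps (c * s - x s 2) a * (1 - (σ s)⁻¹ * p s 2) := by
    rintro a (rfl | rfl) s <;>
      · rw [hPdef]
        simp [hE, hB, cross, hepsz, Matrix.vecHead, Matrix.vecTail]
        ring
  have hP2 : ∀ s, P s 2 = q * Es3 (x s 2)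
      + (σ s)⁻¹ * (p s 0 * (q * eps (c * s - x s 2) 0) + p s 1 * (q * eps (c * s - x s 2) 1)) := by
    intro s
    rw [hPdef]
    simp [hE, hB, cross, hepsz, Matrix.vecHead, Matrix.vecTail]
    ring
  -- x³ derivative
  have hx' : ∀ s, HasDerivAt (fun r => x r 2) (c / σ s * p s 2) s := by
    intro s
    rw [hσdef]
    have := hasDerivAt_pi.1 (hsol s).2 2
    simpa using this
  -- ξ derivative
  have hΞ' : ∀ s, HasDerivAt (fun r => c * r - x r 2) (c - c / σ s * p s 2) s := by
    intro s
    exact (((hasDerivAt_id' s).const_mul c).sub (hx' s)).congr_deriv (by ring)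
  -- tinv derivative
  have hx2C : ContDiff ℝ 1 (fun r => x r 2) :=
    (ContinuousLinearMap.proj (R := ℝ) (φ := fun _ : Fin 3 => ℝ) 2).contDiff.comp hxC
  have hΞC : ContDiff ℝ 1 (fun r => c * r - x r 2) :=
    (contDiff_const.mul contDiff_id).sub hx2C
  have hΞs : ∀ s, HasStrictDerivAt (fun r => c * r - x r 2) (c - c / σ s * p s 2) s :=
    fun s => hΞC.contDiffAt.hasStrictDerivAt' (hΞ' s) one_ne_zero
  have htinv' : ∀ s, HasDerivAt tinv (c - c / σ s * p s 2)⁻¹ (c * s - x s 2) := by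
    intro s
    exact ((hΞs s).to_local_left_inverse (ne_of_gt (hDpos s))
      (Filter.Eventually.of_forall htinv)).hasDerivAt
  -- sqrt derivative
  have hsqrt' : ∀ s, HasDerivAt (fun r => Real.sqrt (m ^ 2 * c ^ 2 + sq3 (p r)))
      ((p s 0 * P s 0 + p s 1 * P s 1 + p s 2 * P s 2) / σ s) s := by
    intro s
    have hfeq : (fun r => m ^ 2 * c ^ 2 + sq3 (p r))
        = (fun r => m ^ 2 * c ^ 2 + (p r 0 * p r 0 + p r 1 * p r 1 + p r 2 * p r 2)) := by
      funext r; simp [sq3]; ring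
    have h1 : HasDerivAt (fun r => m ^ 2 * c ^ 2 + sq3 (p r))
        (P s 0 * p s 0 + p s 0 * P s 0 + (P s 1 * p s 1 + p s 1 * P s 1)
          + (P s 2 * p s 2 + p s 2 * P s 2)) s := by
      rw [hfeq]
      exact ((((hp' s 0).mul (hp' s 0)).add ((hp' s 1).mul (hp' s 1))).add
        ((hp' s 2).mul (hp' s 2))).const_add _
    have h2 := (Real.hasDerivAt_sqrt (ne_of_gt (hin s))).comp s h1
    have h3 : HasDerivAt (fun r => Real.sqrt (m ^ 2 * c ^ 2 + sq3 (p r)))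
        (1 / (2 * Real.sqrt (m ^ 2 * c ^ 2 + sq3 (p s))) *
          (P s 0 * p s 0 + p s 0 * P s 0 + (P s 1 * p s 1 + p s 1 * P s 1)
            + (P s 2 * p s 2 + p s 2 * P s 2))) s := h2
    convert h3 using 1
    rw [hσdef]
    have h4 : Real.sqrt (m ^ 2 * c ^ 2 + sq3 (p s)) ≠ 0 := by
      rw [← hσdef]; exact (hσpos s).ne'
    field_simp
    ring
  -- momentum conservation
  have hmom : ∀ (a : Fin 3), a = 0 ∨ a = 1 → ∀ s : ℝ,
      (m * c ^ 2 / q) * ((m * c)⁻¹ * p s a) + alpha (c * s - x s 2) a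
        = (m * c ^ 2 / q) * ((m * c)⁻¹ * p t₀ a) + alpha (c * t₀ - x t₀ 2) a := by
    intro a ha s
    have hF' : ∀ r : ℝ, HasDerivAt
        (fun r => (m * c ^ 2 / q) * ((m * c)⁻¹ * p r a) + alpha (c * r - x r 2) a) 0 r := by
      intro r
      have h1 : HasDerivAt (fun r => (m * c ^ 2 / q) * ((m * c)⁻¹ * p r a))
          ((m * c ^ 2 / q) * ((m * c)⁻¹ * P r a)) r :=
        ((hp' r a).const_mul ((m * c)⁻¹)).const_mul (m * c ^ 2 / q)
      have h2 : HasDerivAt (fun η => alpha η a) (-(eps (c * r - x r 2) a)) (c * r - x r 2) :=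
        alpha_hasDerivAt eps heps hepsi alpha halpha a (c * r - x r 2)
      have h3 : HasDerivAt (fun r => alpha (c * r - x r 2) a)
          (-(eps (c * r - x r 2) a) * (c - c / σ r * p r 2)) r := by have h := h2.comp r (hΞ' r); exact h
      have h5 : HasDerivAt
          (fun r => (m * c ^ 2 / q) * ((m * c)⁻¹ * p r a) + alpha (c * r - x r 2) a)
          ((m * c ^ 2 / q) * ((m * c)⁻¹ * P r a)
            + -(eps (c * r - x r 2) a) * (c - c / σ r * p r 2)) r := h1.add h3
      have hz : (m * c ^ 2 / q) * ((m * c)⁻¹ * P r a)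
          + -(eps (c * r - x r 2) a) * (c - c / σ r * p r 2) = 0 := by
        rw [hPa a ha r]
        have hσ0 := (hσpos r).ne'
        field_simp
        ring
      rw [← hz]
      exact h5
    exact is_const_of_deriv_eq_zero (fun r => (hF' r).differentiableAt)
      (fun r => (hF' r).deriv) s t₀
  intro t
  -- the key momentum identity at time t
  have huhat : ∀ a : Fin 3, uhat m c p tinv (c * t - x t 2) a = (m * c)⁻¹ * p t a := by
    intro a; simp [uhat, htinv t]
  have huhat₀ : ∀ a : Fin 3, uhat m c p tinv (c * t₀ - x t₀ 2) a = (m * c)⁻¹ * p t₀ a := by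
    intro a; simp [uhat, htinv t₀]
  have hKa : ∀ (a : Fin 3), a = 0 ∨ a = 1 →
      q / (m * c ^ 2) * (K a - alpha (c * t - x t 2) a) = (m * c)⁻¹ * p t a := by
    intro a ha
    have h1 := hmom a ha t
    have h2 : K a = (m * c ^ 2 / q) * ((m * c)⁻¹ * p t a) + alpha (c * t - x t 2) a := by
      rw [hK a, huhat₀ a, h1]
    rw [h2]
    have hm0 := hm.ne'
    have hc0 := hc.ne'
    field_simp
    ring
  have hmc : (0:ℝ) < m * c := mul_pos hm hc
  have hsh' : ∀ η : ℝ, (m * c) * shat m c p tinv η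
      = Real.sqrt (m ^ 2 * c ^ 2 + sq3 (p (tinv η))) - p (tinv η) 2 := by
    intro η
    have h1 : 1 + sq3 ((m * c)⁻¹ • p (tinv η))
        = (m ^ 2 * c ^ 2 + sq3 (p (tinv η))) * ((m * c)⁻¹) ^ 2 := by
      simp only [sq3, Pi.smul_apply, smul_eq_mul]
      field_simp
    simp only [shat, gammahat, uhat, Pi.smul_apply, smul_eq_mul]
    rw [h1, Real.sqrt_mul (hin (tinv η)).le, Real.sqrt_sq (by positivity)]
    field_simp
  refine ⟨fun a ha => by rw [huhat a]; exact (hKa a ha).symm, ?_, ?_⟩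
  · -- z' equation
    have hvt : v (c * t - x t 2)
        = ((m * c)⁻¹ * p t 0) ^ 2 + ((m * c)⁻¹ * p t 1) ^ 2 := by
      rw [hv (c * t - x t 2), hKa 0 (Or.inl rfl), hKa 1 (Or.inr rfl)]
    have hsh : shat m c p tinv (c * t - x t 2) = (σ t - p t 2) / (m * c) := by
      have h := hsh' (c * t - x t 2)
      rw [htinv t, ← hσdef t] at h
      rw [eq_div_iff hmc.ne']
      linear_combination h
    have houter : HasDerivAt (fun r => x r 2) (c / σ t * p t 2) (tinv (c * t - x t 2)) := by
      rw [htinv t]; exact hx' t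
    have hz' := houter.comp (c * t - x t 2) (htinv' t)
    have hval : (1 + v (c * t - x t 2)) / (2 * (shat m c p tinv (c * t - x t 2)) ^ 2) - 1 / 2
        = c / σ t * p t 2 * (c - c / σ t * p t 2)⁻¹ := by
      rw [hvt, hsh]
      have h2 := hσsq t
      simp only [sq3] at h2
      have hσ0 := (hσpos t).ne'
      have hsp0 := (hgap' t).ne'
      have hm0 := hm.ne'
      have hc0 := hc.ne'
      have hrhs : c / σ t * p t 2 * (c - c / σ t * p t 2)⁻¹ = p t 2 / (σ t - p t 2) := by
        rw [show c - c / σ t * p t 2 = c * (σ t - p t 2) / σ t from by field_simp]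
        field_simp
      have hnum : 1 + (((m * c)⁻¹ * p t 0) ^ 2 + ((m * c)⁻¹ * p t 1) ^ 2)
          = (σ t - p t 2) * (σ t + p t 2) / (m * c) ^ 2 := by
        field_simp
        first
        | linear_combination h2
        | linear_combination 2 * h2
        | linear_combination (-1 : ℝ) * h2
        | linear_combination (-2 : ℝ) * h2
        | linear_combination 4 * h2
        | linear_combination (-4 : ℝ) * h2
      rw [hrhs, hnum]
      field_simp
      ring
    rw [hval]
    exact hz'
  · -- s' equation
    have hfun3 : (fun η => m * c ^ 2 * shat m c p tinv η)
        = (fun r => c * (Real.sqrt (m ^ 2 * c ^ 2 + sq3 (p r)) - p r 2)) ∘ tinv := by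
      funext η
      show m * c ^ 2 * shat m c p tinv η
        = c * (Real.sqrt (m ^ 2 * c ^ 2 + sq3 (p (tinv η))) - p (tinv η) 2)
      rw [← hsh' η]
      ring
    have hG : HasDerivAt (fun r => c * (Real.sqrt (m ^ 2 * c ^ 2 + sq3 (p r)) - p r 2))
        (c * ((p t 0 * P t 0 + p t 1 * P t 1 + p t 2 * P t 2) / σ t - P t 2))
        (tinv (c * t - x t 2)) := by
      rw [htinv t]
      exact ((hsqrt' t).sub (hp' t 2)).const_mul c
    have h3' := hG.comp (c * t - x t 2) (htinv' t)
    have hxh : xhat x tinv (c * t - x t 2) 2 = x t 2 := by simp [xhat, htinv t]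
    have hkey : c * ((p t 0 * P t 0 + p t 1 * P t 1 + p t 2 * P t 2) / σ t - P t 2)
        = -(q * Es3 (x t 2)) * (c - c / σ t * p t 2) := by
      rw [hPa 0 (Or.inl rfl) t, hPa 1 (Or.inr rfl) t, hP2 t]
      have hσ0 := (hσpos t).ne'
      field_simp
      ring
    have hval3 : -(q * Es3 (xhat x tinv (c * t - x t 2) 2))
        = c * ((p t 0 * P t 0 + p t 1 * P t 1 + p t 2 * P t 2) / σ t - P t 2)
          * (c - c / σ t * p t 2)⁻¹ := by
      rw [hxh, hkey, mul_assoc, mul_inv_cancel₀ (hDpos t).ne', mul_one]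
    rw [hfun3, hval3]
    exact h3'
end
end

section
/- Let m, c > 0, q ∈ ℝ, let ε⊥ : ℝ → ℝ² be continuous and integrable, and set α⊥(ξ) := −∫_{−∞}^{ξ} ε⊥(ζ)dζ. Fix s₀ > 0, K⊥ ∈ ℝ², z₀ ∈ ℝ, x₀⊥ ∈ ℝ², ξ₀ ∈ ℝ, and define on ℝ: û⊥(ξ) := (q/(mc²))·(K⊥ − α⊥(ξ)), ŝ(ξ) := s₀, γ̂(ξ) := (1 + ‖û⊥(ξ)‖² + s₀²)/(2s₀), û³(ξ) := γ̂(ξ) − s₀, ẑ(ξ) := z₀ + ((1 − s₀²)/(2s₀²))·(ξ − ξ₀) + ∫_{ξ₀}^{ξ} ‖û⊥(ζ)‖²/(2s₀²) dζ, x̂⊥(ξ) := x₀⊥ + ∫_{ξ₀}^{ξ} û⊥(ζ)/s₀ dζ. Then these functions satisfy: γ̂(ξ) = √(1 + ‖û⊥(ξ)‖² + û³(ξ)²); (x̂⊥)'(ξ) = û⊥(ξ)/ŝ(ξ); ẑ'(ξ) = (1 + ‖û⊥(ξ)‖²)/(2ŝ(ξ)²) − 1/2; ŝ'(ξ) = 0;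 and mc²·(û⊥)'(ξ) = q·ε⊥(ξ) at every point where ε⊥ is continuous. That is, they solve the ξ-parametrized equations of motion of a charge in the pure plane travelling wave E(t,x) = ε⊥(ct−x³), B(t,x) = k × ε⊥(ct−x³) with zero static fields. -/
open MeasureTheory

/-- The explicit functions `û⊥ = (q/(mc²))(K⊥ − α⊥)`, `ŝ ≡ s₀`,
`γ̂ = (1+‖û⊥‖²+s₀²)/(2s₀)`, `û³ = γ̂ − s₀`,
`ẑ(ξ) = z₀ + ((1−s₀²)/(2s₀²))(ξ−ξ₀) + ∫_{ξ₀}^ξ ‖û⊥‖²/(2s₀²)`,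
`x̂⊥(ξ) = x₀⊥ + ∫_{ξ₀}^ξ û⊥/s₀` solve the ξ-parametrized equations of motion of a
charge in a pure plane travelling wave with zero static fields:
`γ̂ = √(1+‖û⊥‖²+(û³)²)`, `(x̂⊥)' = û⊥/ŝ`, `ẑ' = (1+‖û⊥‖²)/(2ŝ²) − 1/2`, `ŝ' = 0`,
`mc²(û⊥)' = qε⊥(ξ)`. -/
theorem stmt_10 (m c q : ℝ) (hm : 0 < m) (hc : 0 < c)
    (eps : ℝ → EuclideanSpace ℝ (Fin 2)) (heps : Continuous eps) (hepsi : Integrable eps)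
    (alpha : ℝ → EuclideanSpace ℝ (Fin 2))
    (halpha : ∀ ξ : ℝ, alpha ξ = -∫ ζ in Set.Iic ξ, eps ζ)
    (s₀ : ℝ) (hs₀ : 0 < s₀) (K : EuclideanSpace ℝ (Fin 2)) (z₀ : ℝ)
    (x₀ : EuclideanSpace ℝ (Fin 2)) (ξ₀ : ℝ)
    (uperp : ℝ → EuclideanSpace ℝ (Fin 2))
    (huperp : ∀ ξ : ℝ, uperp ξ = (q / (m * c ^ 2)) • (K - alpha ξ))
    (shat : ℝ → ℝ) (hshat : ∀ ξ : ℝ, shat ξ = s₀)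
    (gamma : ℝ → ℝ)
    (hgamma : ∀ ξ : ℝ, gamma ξ = (1 + ‖uperp ξ‖ ^ 2 + s₀ ^ 2) / (2 * s₀))
    (u3 : ℝ → ℝ) (hu3 : ∀ ξ : ℝ, u3 ξ = gamma ξ - s₀)
    (zhat : ℝ → ℝ)
    (hzhat : ∀ ξ : ℝ, zhat ξ = z₀ + ((1 - s₀ ^ 2) / (2 * s₀ ^ 2)) * (ξ - ξ₀) +
      ∫ ζ in ξ₀..ξ, ‖uperp ζ‖ ^ 2 / (2 * s₀ ^ 2))
    (xperp : ℝ → EuclideanSpace ℝ (Fin 2))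
    (hxperp : ∀ ξ : ℝ, xperp ξ = x₀ + ∫ ζ in ξ₀..ξ, s₀⁻¹ • uperp ζ) :
    ∀ ξ : ℝ,
      gamma ξ = Real.sqrt (1 + ‖uperp ξ‖ ^ 2 + (u3 ξ) ^ 2) ∧
      HasDerivAt xperp ((shat ξ)⁻¹ • uperp ξ) ξ ∧
      HasDerivAt zhat ((1 + ‖uperp ξ‖ ^ 2) / (2 * (shat ξ) ^ 2) - 1 / 2) ξ ∧
      HasDerivAt shat 0 ξ ∧
      HasDerivAt (fun η : ℝ => (m * c ^ 2) • uperp η) (q • eps ξ) ξ := by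
  -- alpha has derivative -eps everywhere
  have halpha' : ∀ ξ : ℝ, HasDerivAt alpha (-(eps ξ)) ξ := by
    intro ξ
    have hrw : ∀ η : ℝ, alpha η = alpha 0 - ∫ ζ in (0:ℝ)..η, eps ζ := by
      intro η
      rw [halpha, halpha,
        ← intervalIntegral.integral_Iic_sub_Iic (hepsi.integrableOn) (hepsi.integrableOn)]
      abel
    have hI : HasDerivAt (fun η : ℝ => ∫ ζ in (0:ℝ)..η, eps ζ) (eps ξ) ξ :=
      intervalIntegral.integral_hasDerivAt_right (hepsi.intervalIntegrable)
        heps.aestronglyMeasurable.stronglyMeasurableAtFilter heps.continuousAt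
    have := (hasDerivAt_const ξ (alpha 0)).fun_sub hI
    simpa [zero_sub, ← hrw] using this.congr_deriv rfl
  have halphaC : Continuous alpha := by
    have : Differentiable ℝ alpha := fun ξ => (halpha' ξ).differentiableAt
    exact this.continuous
  have huC : Continuous uperp := by
    have : Continuous fun ξ => (q / (m * c ^ 2)) • (K - alpha ξ) :=
      (continuous_const.sub halphaC).fun_const_smul _
    simpa [funext huperp] using this
  intro ξ
  have hs₀' : s₀ ≠ 0 := ne_of_gt hs₀
  refine ⟨?_, ?_, ?_, ?_, ?_⟩
  · -- gamma = sqrt(...)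
    rw [hgamma, hu3, hgamma]
    have hsq : 1 + ‖uperp ξ‖ ^ 2 + ((1 + ‖uperp ξ‖ ^ 2 + s₀ ^ 2) / (2 * s₀) - s₀) ^ 2
        = ((1 + ‖uperp ξ‖ ^ 2 + s₀ ^ 2) / (2 * s₀)) ^ 2 := by
      field_simp
      ring
    rw [hsq, Real.sqrt_sq]
    positivity
  · -- xperp derivative
    have hI : HasDerivAt (fun η : ℝ => ∫ ζ in ξ₀..η, s₀⁻¹ • uperp ζ) (s₀⁻¹ • uperp ξ) ξ :=
      intervalIntegral.integral_hasDerivAt_right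
        ((huC.fun_const_smul _).intervalIntegrable _ _)
        (huC.fun_const_smul _).aestronglyMeasurable.stronglyMeasurableAtFilter
        (huC.fun_const_smul _).continuousAt
    have := (hasDerivAt_const ξ x₀).fun_add hI
    rw [hshat]
    simpa [funext hxperp] using this
  · -- zhat derivative
    have hgcont : Continuous fun ζ => ‖uperp ζ‖ ^ 2 / (2 * s₀ ^ 2) :=
      ((huC.norm.pow 2).div_const _)
    have hI : HasDerivAt (fun η : ℝ => ∫ ζ in ξ₀..η, ‖uperp ζ‖ ^ 2 / (2 * s₀ ^ 2))
        (‖uperp ξ‖ ^ 2 / (2 * s₀ ^ 2)) ξ :=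
      intervalIntegral.integral_hasDerivAt_right (hgcont.intervalIntegrable _ _)
        hgcont.aestronglyMeasurable.stronglyMeasurableAtFilter hgcont.continuousAt
    have hlin : HasDerivAt (fun η : ℝ => z₀ + ((1 - s₀ ^ 2) / (2 * s₀ ^ 2)) * (η - ξ₀))
        ((1 - s₀ ^ 2) / (2 * s₀ ^ 2)) ξ := by
      simpa using (hasDerivAt_const ξ z₀).fun_add
        (((hasDerivAt_id ξ).sub_const ξ₀).const_mul ((1 - s₀ ^ 2) / (2 * s₀ ^ 2)))
    have hsum := hlin.add hI
    have heq : (1 - s₀ ^ 2) / (2 * s₀ ^ 2) + ‖uperp ξ‖ ^ 2 / (2 * s₀ ^ 2)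
        = (1 + ‖uperp ξ‖ ^ 2) / (2 * (shat ξ) ^ 2) - 1 / 2 := by
      rw [hshat]
      field_simp
      ring
    rw [← heq]
    have hfun : zhat = fun η => (z₀ + ((1 - s₀ ^ 2) / (2 * s₀ ^ 2)) * (η - ξ₀)) +
        ∫ ζ in ξ₀..η, ‖uperp ζ‖ ^ 2 / (2 * s₀ ^ 2) := funext hzhat
    rw [hfun]
    exact hsum
  · -- shat derivative
    have : HasDerivAt (fun _ : ℝ => s₀) 0 ξ := hasDerivAt_const ξ s₀
    simpa [funext hshat] using this
  · -- uperp force equation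
    have hne : m * c ^ 2 ≠ 0 := by positivity
    have h1 : ∀ η : ℝ, (m * c ^ 2) • uperp η = q • K - q • alpha η := by
      intro η
      rw [huperp, smul_smul]
      field_simp
      rw [smul_sub]
    have h2 : HasDerivAt (fun η => q • K - q • alpha η) (q • eps ξ) ξ := by
      have := (hasDerivAt_const ξ (q • K)).fun_sub ((halpha' ξ).fun_const_smul q)
      simpa [smul_neg] using this
    simpa [funext h1] using h2
end

section
/- Let ε₀ : ℝ → ℝ be C² with ε₀, ε₀', ε₀'' ∈ L¹(ℝ) and ε₀' bounded, and let k ≠ 0. For η > 0 define I(η) := ∫_ℝ ε₀(ξ/η)·e^{ikξ} dξ. Then |I(η)| ≤ (sup_ℝ |ε₀'| + ∫_ℝ |ε₀''|)/(η·k²); in particular I(η) → 0 as η → ∞. Consequently, for the modulated monochromatic pump ε⊥(ξ) = ε₀(ξ/η)·(a₁cos(kξ+φ₁), a₂sin(kξ+φ₂)) (a₁,a₂,φ₁,φ₂ ∈ ℝ), the final transverse momentum u_f⊥(η) = (q/(mc²))·∫_ℝ ε⊥(ξ)dξ of a charged particle initially at rest, and its final energy gain 𝓔_f(η) = ‖u_f⊥(η)‖²/2,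 both tend to 0 as η → ∞ (generalized Lawson–Woodward theorem: no net acceleration by a slowly modulated plane travelling wave in vacuum with zero static fields). -/
open MeasureTheory Filter
open Real Complex RealInnerProductSpace FourierTransform


private lemma LW_key (ε₀ : ℝ → ℝ) (hC2 : ContDiff ℝ 2 ε₀)
    (h0 : Integrable ε₀) (h1 : Integrable (deriv ε₀)) (h2 : Integrable (deriv (deriv ε₀)))
    (k : ℝ) (hk : k ≠ 0) (η : ℝ) (hη : 0 < η) :
    ‖∫ ξ : ℝ, (ε₀ (ξ / η) : ℂ) * Complex.exp (Complex.I * k * ξ)‖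
      ≤ (∫ x : ℝ, |deriv (deriv ε₀) x|) / (η * k ^ 2) := by
  have hd : Differentiable ℝ ε₀ := hC2.differentiable (by norm_num)
  have hd1 : Differentiable ℝ (deriv ε₀) := (hC2.iterate_deriv' 1 1).differentiable (by norm_num)
  set f : ℝ → ℂ := fun ξ : ℝ => ((ε₀ (ξ / η) : ℝ) : ℂ) with hf_def
  -- derivatives
  have hD : ∀ (g : ℝ → ℝ), Differentiable ℝ g →
      deriv (fun ξ : ℝ => ((g (ξ / η) : ℝ) : ℂ)) = fun ξ => ((η⁻¹ * deriv g (ξ / η) : ℝ) : ℂ) := by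
    intro g hg
    funext ξ
    have h1 : HasDerivAt (fun ξ : ℝ => g (ξ / η)) (deriv g (ξ / η) * (1 / η)) ξ :=
      (hg (ξ / η)).hasDerivAt.comp ξ ((hasDerivAt_id ξ).div_const η)
    rw [h1.ofReal_comp.deriv]; push_cast; ring
  have hdf : deriv f = fun ξ => ((η⁻¹ * deriv ε₀ (ξ / η) : ℝ) : ℂ) := hD ε₀ hd
  have hddf : deriv (deriv f) = fun ξ => ((η⁻¹ * (η⁻¹ * deriv (deriv ε₀) (ξ / η)) : ℝ) : ℂ) := by
    rw [hdf]
    have := hD (fun x => η⁻¹ * deriv ε₀ x) (hd1.const_mul _)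
    simp only [deriv_const_mul_field] at this ⊢
    rw [show (fun ξ : ℝ => ((η⁻¹ * deriv ε₀ (ξ / η) : ℝ) : ℂ)) =
      (fun ξ : ℝ => (((fun x => η⁻¹ * deriv ε₀ x) (ξ / η) : ℝ) : ℂ)) from rfl, this]
  -- integrability
  have int0 : Integrable f := (h0.comp_div hη.ne').ofReal
  have int1 : Integrable (deriv f) := by
    rw [hdf]
    exact (((h1.comp_div hη.ne').const_mul η⁻¹).ofReal).congr (by filter_upwards with x; norm_num)
  have int2 : Integrable (deriv (deriv f)) := by
    rw [hddf]
    exact ((((h2.comp_div hη.ne').const_mul (η⁻¹*η⁻¹)).ofReal).congr (by filter_upwards with x; norm_num [mul_assoc]))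
  have hdiff : Differentiable ℝ f := by
    intro ξ
    exact (((hd (ξ / η)).hasDerivAt.comp ξ ((hasDerivAt_id ξ).div_const η)).ofReal_comp).differentiableAt
  have hdiff1 : Differentiable ℝ (deriv f) := by
    rw [hdf]
    intro ξ
    exact ((((hd1 (ξ / η)).hasDerivAt.comp ξ ((hasDerivAt_id ξ).div_const η)).const_mul η⁻¹).ofReal_comp).differentiableAt
  -- Fourier identities
  have F1 := Real.fourier_deriv int0 hdiff int1
  have F2 := Real.fourier_deriv int1 hdiff1 int2
  set w : ℝ := -(k / (2 * π)) with hw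
  have hπ : (π : ℝ) ≠ 0 := Real.pi_ne_zero
  have hwnorm : ‖(2 * (π:ℂ) * Complex.I * (w:ℂ))‖ = |k| := by
    have : (2 * (π:ℂ) * Complex.I * (w:ℂ)) = -(k:ℂ) * Complex.I := by
      have h2π : (2*(π:ℂ)) ≠ 0 := by
        simp [Complex.ofReal_ne_zero, Real.pi_ne_zero]
      rw [hw]; push_cast; field_simp
    rw [this]
    simp
  have hnorm2 : ‖𝓕 (deriv (deriv f)) w‖ = |k| * (|k| * ‖𝓕 f w‖) := by
    rw [F2, F1]
    simp only [Pi.smul_apply]  -- maybe not needed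
    rw [norm_smul, norm_smul, hwnorm]
  have hbnd : ‖𝓕 (deriv (deriv f)) w‖ ≤ ∫ x : ℝ, ‖deriv (deriv f) x‖ :=
    VectorFourier.norm_fourierIntegral_le_integral_norm _ _ _ _ _
  have hcomp : (∫ x : ℝ, ‖deriv (deriv f) x‖) = (η⁻¹) * ∫ x : ℝ, |deriv (deriv ε₀) x| := by
    rw [hddf]
    simp only [Complex.norm_real, Real.norm_eq_abs, abs_mul, abs_inv, abs_of_pos hη]
    rw [integral_const_mul, integral_const_mul, MeasureTheory.Measure.integral_comp_div (fun x => |deriv (deriv ε₀) x|) η]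
    rw [abs_of_pos hη, smul_eq_mul]
    field_simp
  -- identify Iosc with 𝓕 f w
  have hid : (∫ ξ : ℝ, (ε₀ (ξ / η) : ℂ) * Complex.exp (Complex.I * k * ξ)) = 𝓕 f w := by
    rw [Real.fourier_eq']
    congr 1
    funext v
    rw [smul_eq_mul, mul_comm]
    congr 2
    have harg : (-2 : ℝ) * π * (inner ℝ v w : ℝ) = k * v := by
      simp only [hw, RCLike.inner_apply, conj_trivial]
      field_simp
    rw [harg]
    push_cast
    ring
  rw [hid]
  have hineq : k ^ 2 * ‖𝓕 f w‖ ≤ η⁻¹ * ∫ x : ℝ, |deriv (deriv ε₀) x| := by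
    have h := hbnd
    rw [hcomp, hnorm2] at h
    calc k ^ 2 * ‖𝓕 f w‖ = |k| * (|k| * ‖𝓕 f w‖) := by
          rw [← _root_.sq_abs k, sq]; ring
      _ ≤ _ := h
  have hmul := mul_le_mul_of_nonneg_left hineq hη.le
  rw [le_div_iff₀ (by positivity : (0:ℝ) < η * k ^ 2)]
  calc ‖𝓕 f w‖ * (η * k ^ 2) = η * (k ^ 2 * ‖𝓕 f w‖) := by ring
    _ ≤ η * (η⁻¹ * ∫ x : ℝ, |deriv (deriv ε₀) x|) := hmul
    _ = ∫ x : ℝ, |deriv (deriv ε₀) x| := by field_simp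

private lemma LW_norm_fin2 (v : EuclideanSpace ℝ (Fin 2)) : ‖v‖ ≤ |v 0| + |v 1| := by
  rw [EuclideanSpace.norm_eq]
  simp only [Fin.sum_univ_two, Real.norm_eq_abs, _root_.sq_abs]
  rw [show |v 0| + |v 1| = Real.sqrt ((|v 0| + |v 1|)^2) from (Real.sqrt_sq (by positivity)).symm]
  apply Real.sqrt_le_sqrt
  nlinarith [abs_nonneg (v 0), abs_nonneg (v 1), _root_.sq_abs (v 0), _root_.sq_abs (v 1)]

private lemma LW_cossin (g : ℝ → ℝ) (hg : Integrable g) (k φ : ℝ) :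
    |∫ ξ : ℝ, g ξ * Real.cos (k * ξ + φ)| ≤ ‖∫ ξ : ℝ, (g ξ : ℂ) * Complex.exp (Complex.I * k * ξ)‖ ∧
    |∫ ξ : ℝ, g ξ * Real.sin (k * ξ + φ)| ≤ ‖∫ ξ : ℝ, (g ξ : ℂ) * Complex.exp (Complex.I * k * ξ)‖ := by
  have hbd : ∀ θ : ℝ → ℝ, Integrable (fun ξ => (g ξ : ℂ) * Complex.exp (Complex.I * θ ξ)) → True := fun _ _ => trivial
  have hint : ∀ b : ℝ, Integrable (fun ξ => (g ξ : ℂ) * Complex.exp (((k * ξ + b : ℝ) : ℂ) * Complex.I)) := by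
    intro b
    have hm : AEStronglyMeasurable (fun ξ : ℝ => Complex.exp (((k * ξ + b : ℝ) : ℂ) * Complex.I)) volume := by
      apply Continuous.aestronglyMeasurable
      exact Complex.continuous_exp.comp (by continuity)
    have hb : ∃ C : ℝ, ∀ ξ : ℝ, ‖Complex.exp (((k * ξ + b : ℝ) : ℂ) * Complex.I)‖ ≤ C :=
      ⟨1, fun ξ => by rw [Complex.norm_exp_ofReal_mul_I]⟩
    exact ((hg.ofReal.bdd_mul hm (ae_of_all _ hb.choose_spec)).congr (ae_of_all _ fun ξ => mul_comm _ _))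
  have key : ∀ b : ℝ, ‖∫ ξ : ℝ, (g ξ : ℂ) * Complex.exp (((k * ξ + b : ℝ) : ℂ) * Complex.I)‖
      = ‖∫ ξ : ℝ, (g ξ : ℂ) * Complex.exp (Complex.I * k * ξ)‖ := by
    intro b
    have : (fun ξ : ℝ => (g ξ : ℂ) * Complex.exp (((k * ξ + b : ℝ) : ℂ) * Complex.I))
        = fun ξ : ℝ => ((g ξ : ℂ) * Complex.exp (Complex.I * k * ξ)) * Complex.exp (b * Complex.I) := by
      funext ξ; rw [mul_assoc, ← Complex.exp_add]; push_cast; ring_nf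
    rw [this, integral_mul_const, norm_mul]
    simp [Complex.norm_exp]
  constructor
  · have hre : (∫ ξ : ℝ, g ξ * Real.cos (k * ξ + φ))
        = (∫ ξ : ℝ, (g ξ : ℂ) * Complex.exp (((k * ξ + φ : ℝ) : ℂ) * Complex.I)).re := by
      rw [← RCLike.re_to_complex, ← integral_re (hint φ)]
      congr 1; funext ξ
      simp only [RCLike.re_to_complex]
      rw [Complex.re_ofReal_mul, Complex.exp_ofReal_mul_I_re]
    rw [hre, ← key φ]
    exact Complex.abs_re_le_norm _
  · have him : (∫ ξ : ℝ, g ξ * Real.sin (k * ξ + φ))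
        = (∫ ξ : ℝ, (g ξ : ℂ) * Complex.exp (((k * ξ + φ : ℝ) : ℂ) * Complex.I)).im := by
      rw [← RCLike.im_to_complex, ← integral_im (hint φ)]
      congr 1; funext ξ
      simp only [RCLike.im_to_complex]
      rw [Complex.im_ofReal_mul, Complex.exp_ofReal_mul_I_im]
    rw [him, ← key φ]
    exact Complex.abs_im_le_norm _



/-- **generalized Lawson–Woodward theorem.** For a C² envelope
`ε₀` with `ε₀, ε₀', ε₀'' ∈ L¹` and `ε₀'` bounded, and `k ≠ 0`, the oscillatory
integral `I(η) = ∫_ℝ ε₀(ξ/η)e^{ikξ}dξ` obeys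
`|I(η)| ≤ (sup|ε₀'| + ∫|ε₀''|)/(ηk²)` for `η > 0`, hence `I(η) → 0` as `η → ∞`;
consequently, for the modulated monochromatic pump
`ε⊥(ξ) = ε₀(ξ/η)(a₁cos(kξ+φ₁), a₂sin(kξ+φ₂))`, the final transverse momentum
`u_f⊥(η) = (q/(mc²))∫_ℝ ε⊥` and the final energy gain `𝓔_f(η) = ‖u_f⊥(η)‖²/2`
of a particle initially at rest both tend to `0` as `η → ∞`. -/
theorem stmt_12 (m c q : ℝ) (hm : 0 < m) (hc : 0 < c) (k : ℝ) (hk : k ≠ 0)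
    (ε₀ : ℝ → ℝ) (hC2 : ContDiff ℝ 2 ε₀)
    (h0 : Integrable ε₀) (h1 : Integrable (deriv ε₀)) (h2 : Integrable (deriv (deriv ε₀)))
    (hbdd : ∃ M : ℝ, ∀ x : ℝ, |deriv ε₀ x| ≤ M)
    (a₁ a₂ φ₁ φ₂ : ℝ)
    (eps : ℝ → ℝ → EuclideanSpace ℝ (Fin 2))
    (heps : ∀ η ξ : ℝ, eps η ξ =
      ε₀ (ξ / η) • ![a₁ * Real.cos (k * ξ + φ₁), a₂ * Real.sin (k * ξ + φ₂)])
    (Iosc : ℝ → ℂ)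
    (hIosc : ∀ η : ℝ, Iosc η = ∫ ξ : ℝ, (ε₀ (ξ / η) : ℂ) * Complex.exp (Complex.I * k * ξ))
    (uf : ℝ → EuclideanSpace ℝ (Fin 2))
    (huf : ∀ η : ℝ, uf η = (q / (m * c ^ 2)) • ∫ ξ : ℝ, eps η ξ)
    (Ef : ℝ → ℝ) (hEf : ∀ η : ℝ, Ef η = ‖uf η‖ ^ 2 / 2) :
    (∀ η : ℝ, 0 < η →
      ‖Iosc η‖ ≤ ((⨆ x : ℝ, |deriv ε₀ x|) + ∫ x : ℝ, |deriv (deriv ε₀) x|) / (η * k ^ 2)) ∧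
    Tendsto Iosc atTop (nhds 0) ∧
    Tendsto uf atTop (nhds 0) ∧
    Tendsto Ef atTop (nhds 0) := by
  set S : ℝ := ⨆ x : ℝ, |deriv ε₀ x| with hS
  set D : ℝ := ∫ x : ℝ, |deriv (deriv ε₀) x| with hD
  have hD0 : 0 ≤ D := integral_nonneg fun x => abs_nonneg _
  have hS0 : 0 ≤ S := by
    obtain ⟨M, hM⟩ := hbdd
    have hbd : BddAbove (Set.range fun x : ℝ => |deriv ε₀ x|) :=
      ⟨M, by rintro _ ⟨x, rfl⟩; exact hM x⟩
    exact le_trans (abs_nonneg (deriv ε₀ 0)) (le_ciSup hbd 0)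
  -- Part 1
  have part1 : ∀ η : ℝ, 0 < η → ‖Iosc η‖ ≤ (S + D) / (η * k ^ 2) := by
    intro η hη
    have hb := LW_key ε₀ hC2 h0 h1 h2 k hk η hη
    rw [hIosc]
    refine hb.trans ?_
    rw [div_le_div_iff_of_pos_right (by positivity)]
    linarith
  -- Part 2
  have part2 : Tendsto Iosc atTop (nhds 0) := by
    apply squeeze_zero_norm' (a := fun η : ℝ => (S + D) / k ^ 2 * η⁻¹)
    · filter_upwards [eventually_gt_atTop (0:ℝ)] with η hη
      refine (part1 η hη).trans (le_of_eq ?_)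
      rw [mul_comm η, ← div_div, div_eq_mul_inv]
    · simpa using tendsto_inv_atTop_zero.const_mul ((S + D) / k ^ 2)
  have hIn : Tendsto (fun η => ‖Iosc η‖) atTop (nhds 0) :=
    tendsto_zero_iff_norm_tendsto_zero.mp part2
  -- Part 3
  have bound3 : ∀ η : ℝ, 0 < η →
      ‖uf η‖ ≤ |q / (m * c ^ 2)| * ((|a₁| + |a₂|) * ‖Iosc η‖) := by
    intro η hη
    rw [huf η, norm_smul, Real.norm_eq_abs]
    apply mul_le_mul_of_nonneg_left _ (abs_nonneg _)
    by_cases hi : Integrable (eps η)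
    · have hg : Integrable (fun ξ : ℝ => ε₀ (ξ / η)) := h0.comp_div hη.ne'
      have hcs := LW_cossin (fun ξ : ℝ => ε₀ (ξ / η)) hg k
      have hIabs : ∀ b : ℝ,
          ‖∫ ξ : ℝ, ((ε₀ (ξ / η) : ℝ) : ℂ) * Complex.exp (Complex.I * k * ξ)‖ = ‖Iosc η‖ := by
        intro b; rw [hIosc]
      have hc0 : (∫ ξ : ℝ, eps η ξ) 0 = a₁ * ∫ ξ : ℝ, ε₀ (ξ / η) * Real.cos (k * ξ + φ₁) := by
        have key0 : (∫ ξ : ℝ, eps η ξ) 0 = ∫ ξ : ℝ, (eps η ξ) 0 := by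
          simpa using ((EuclideanSpace.proj (0 : Fin 2)).integral_comp_comm hi).symm
        rw [key0, ← integral_const_mul]
        congr 1; funext ξ
        rw [heps]
        simp [PiLp.smul_apply, Matrix.cons_val_zero, smul_eq_mul]
        ring
      have hc1 : (∫ ξ : ℝ, eps η ξ) 1 = a₂ * ∫ ξ : ℝ, ε₀ (ξ / η) * Real.sin (k * ξ + φ₂) := by
        have key1 : (∫ ξ : ℝ, eps η ξ) 1 = ∫ ξ : ℝ, (eps η ξ) 1 := by
          simpa using ((EuclideanSpace.proj (1 : Fin 2)).integral_comp_comm hi).symm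
        rw [key1, ← integral_const_mul]
        congr 1; funext ξ
        rw [heps]
        simp [PiLp.smul_apply, Matrix.cons_val_one, smul_eq_mul]
        ring
      have h0b : |(∫ ξ : ℝ, eps η ξ) 0| ≤ |a₁| * ‖Iosc η‖ := by
        rw [hc0, abs_mul]
        exact mul_le_mul_of_nonneg_left (((hcs φ₁).1).trans_eq (hIabs φ₁)) (abs_nonneg _)
      have h1b : |(∫ ξ : ℝ, eps η ξ) 1| ≤ |a₂| * ‖Iosc η‖ := by
        rw [hc1, abs_mul]
        exact mul_le_mul_of_nonneg_left (((hcs φ₂).2).trans_eq (hIabs φ₂)) (abs_nonneg _)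
      calc ‖∫ ξ : ℝ, eps η ξ‖ ≤ |(∫ ξ : ℝ, eps η ξ) 0| + |(∫ ξ : ℝ, eps η ξ) 1| :=
            LW_norm_fin2 _
        _ ≤ |a₁| * ‖Iosc η‖ + |a₂| * ‖Iosc η‖ := add_le_add h0b h1b
        _ = (|a₁| + |a₂|) * ‖Iosc η‖ := by ring
    · rw [integral_undef hi, norm_zero]
      positivity
  have part3 : Tendsto uf atTop (nhds 0) := by
    apply squeeze_zero_norm'
      (a := fun η : ℝ => |q / (m * c ^ 2)| * ((|a₁| + |a₂|) * ‖Iosc η‖))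
    · filter_upwards [eventually_gt_atTop (0:ℝ)] with η hη using bound3 η hη
    · simpa using (hIn.const_mul (|a₁| + |a₂|)).const_mul (|q / (m * c ^ 2)|)
  -- Part 4
  have part4 : Tendsto Ef atTop (nhds 0) := by
    have hEf' : Ef = fun η => ‖uf η‖ ^ 2 / 2 := funext hEf
    rw [hEf']
    have hn : Tendsto (fun η => ‖uf η‖) atTop (nhds 0) :=
      tendsto_zero_iff_norm_tendsto_zero.mp part3
    simpa using (hn.pow 2).div_const 2
  exact ⟨part1, part2, part3, part4⟩
end

section
/- Let n ≥ 1, k ≠ 0, and let f : ℝ → ℂ be C^{n+1} with f^{(h)} ∈ L¹(ℝ) for all 0 ≤ h ≤ n+1 and with f^{(n)} bounded. Then for every ξ ∈ ℝ: ∫_{−∞}^{ξ} f(ζ)e^{ikζ} dζ = −∑_{h=0}^{n−1} (i/k)^{h+1}·f^{(h)}(ξ)·e^{ikξ} + R_n(ξ), where R_n(ξ) = (i/k)^{n}·∫_{−∞}^{ξ} f^{(n)}(ζ)e^{ikζ} dζ, and |R_n(ξ)| ≤ |k|^{−(n+1)}·(|f^{(n)}(ξ)| + ∫_{−∞}^{ξ}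 |f^{(n+1)}(ζ)| dζ) ≤ (sup_ℝ|f^{(n)}| + ∫_ℝ|f^{(n+1)}|)/|k|^{n+1}. In particular R_n(ξ) = O(1/k^{n+1}) uniformly in ξ, so the displayed sum is an asymptotic expansion in 1/k of the oscillatory integral. -/
open MeasureTheory


lemma norm_expI (k ζ : ℝ) : ‖Complex.exp (Complex.I * k * ζ)‖ = 1 := by
  rw [Complex.norm_exp]
  simp [Complex.mul_re]

lemma mulexp_int {g : ℝ → ℂ} (hg : Integrable g) (k : ℝ) (s : Set ℝ) :
    IntegrableOn (fun ζ => g ζ * Complex.exp (Complex.I * k * ζ)) s := by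
  have h : Integrable (fun ζ : ℝ => Complex.exp (Complex.I * k * ζ) * g ζ) :=
    hg.bdd_mul (Complex.continuous_exp.comp (by continuity)).aestronglyMeasurable (c := 1) (Filter.Eventually.of_forall fun x => le_of_eq (norm_expI k x))
  exact ((h.congr (Filter.Eventually.of_forall fun x => mul_comm _ _))).integrableOn

lemma parts (k : ℝ) (hk : k ≠ 0) (g g' : ℝ → ℂ)
    (hd : ∀ x, HasDerivAt g (g' x) x)
    (hgi : Integrable g) (hg'i : Integrable g') (ξ : ℝ) :
    (∫ ζ in Set.Iic ξ, g ζ * Complex.exp (Complex.I * k * ζ)) =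
      -((Complex.I / k) * g ξ * Complex.exp (Complex.I * k * ξ)) +
        (Complex.I / k) * ∫ ζ in Set.Iic ξ, g' ζ * Complex.exp (Complex.I * k * ζ) := by
  set e : ℝ → ℂ := fun ζ => Complex.exp (Complex.I * k * ζ) with he
  have hde : ∀ x : ℝ, HasDerivAt e (Complex.I * k * e x) x := by
    intro x
    have h1 : HasDerivAt (fun x : ℝ => Complex.I * k * x) (Complex.I * k) x := by
      simpa using ((hasDerivAt_id x).ofReal_comp.const_mul (Complex.I * k))
    simpa [he, mul_comm] using h1.cexp
  have hG : ∀ x : ℝ, HasDerivAt (fun ζ => g ζ * e ζ)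
      (g' x * e x + Complex.I * k * (g x * e x)) x := by
    intro x
    have := (hd x).mul (hde x)
    exact this.congr_deriv (by ring)
  have htend : Filter.Tendsto (fun ζ => g ζ * e ζ) Filter.atBot (nhds 0) := by
    have hg0 : Filter.Tendsto g Filter.atBot (nhds 0) :=
      tendsto_zero_of_hasDerivAt_of_integrableOn_Iic (a := 0)
        (fun x _ => hd x) hg'i.integrableOn hgi.integrableOn
    rw [tendsto_zero_iff_norm_tendsto_zero] at hg0 ⊢
    refine hg0.congr fun x => ?_
    rw [norm_mul, he, norm_expI, mul_one]
  have hint1 : IntegrableOn (fun ζ => g' ζ * e ζ) (Set.Iic ξ) := mulexp_int hg'i k _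
  have hint2 : IntegrableOn (fun ζ => Complex.I * k * (g ζ * e ζ)) (Set.Iic ξ) :=
    (mulexp_int hgi k _).const_mul _
  have key := integral_Iic_of_hasDerivAt_of_tendsto' (fun x _ => hG x)
    (hint1.add hint2) htend
  rw [integral_add hint1 hint2, integral_const_mul] at key
  have hIk : (Complex.I * k) ≠ 0 := by
    simp [Complex.ext_iff, hk]
  have hI' : (Complex.I * (k:ℂ))⁻¹ = -(Complex.I / k) := by
    rw [mul_inv, Complex.inv_I, div_eq_mul_inv]; ring
  have hA : (∫ ζ in Set.Iic ξ, g ζ * e ζ) =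
      (g ξ * e ξ - ∫ ζ in Set.Iic ξ, g' ζ * e ζ) * (Complex.I * (k:ℂ))⁻¹ := by
    rw [eq_mul_inv_iff_mul_eq₀ hIk]
    linear_combination key
  show (∫ ζ in Set.Iic ξ, g ζ * e ζ) = -((Complex.I / k) * g ξ * e ξ) +
      (Complex.I / k) * ∫ ζ in Set.Iic ξ, g' ζ * e ζ
  rw [hA, hI']
  ring

/-- For `n ≥ 1`, `k ≠ 0` and `f : ℝ → ℂ` of class `C^{n+1}`
with `f^{(h)} ∈ L¹` for `0 ≤ h ≤ n+1` and `f^{(n)}` bounded: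
`∫_{−∞}^ξ f(ζ)e^{ikζ}dζ = −∑_{h<n} (i/k)^{h+1} f^{(h)}(ξ)e^{ikξ} + R_n(ξ)` with
`R_n(ξ) = (i/k)ⁿ∫_{−∞}^ξ f^{(n)}(ζ)e^{ikζ}dζ` and
`|R_n(ξ)| ≤ |k|^{−(n+1)}(|f^{(n)}(ξ)| + ∫_{−∞}^ξ|f^{(n+1)}|)
  ≤ (sup|f^{(n)}| + ∫_ℝ|f^{(n+1)}|)/|k|^{n+1}`,
an asymptotic expansion of the oscillatory integral in powers of `1/k` with a
remainder `O(1/k^{n+1})` uniform in `ξ`. -/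
theorem stmt_17 (n : ℕ) (hn : 1 ≤ n) (k : ℝ) (hk : k ≠ 0) (f : ℝ → ℂ)
    (hC : ContDiff ℝ (n + 1) f)
    (hint : ∀ h : ℕ, h ≤ n + 1 → Integrable (iteratedDeriv h f))
    (hbdd : ∃ M : ℝ, ∀ x : ℝ, ‖iteratedDeriv n f x‖ ≤ M)
    (Rn : ℝ → ℂ)
    (hRn : ∀ ξ : ℝ, Rn ξ = (Complex.I / k) ^ n *
      ∫ ζ in Set.Iic ξ, iteratedDeriv n f ζ * Complex.exp (Complex.I * k * ζ)) :
    (∀ ξ : ℝ,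
      (∫ ζ in Set.Iic ξ, f ζ * Complex.exp (Complex.I * k * ζ)) =
        -(∑ h ∈ Finset.range n,
            (Complex.I / k) ^ (h + 1) * iteratedDeriv h f ξ * Complex.exp (Complex.I * k * ξ)) +
          Rn ξ) ∧
    (∀ ξ : ℝ,
      ‖Rn ξ‖ ≤ |k| ^ (-(n : ℤ) - 1) *
          (‖iteratedDeriv n f ξ‖ + ∫ ζ in Set.Iic ξ, ‖iteratedDeriv (n + 1) f ζ‖) ∧
      |k| ^ (-(n : ℤ) - 1) *
          (‖iteratedDeriv n f ξ‖ + ∫ ζ in Set.Iic ξ, ‖iteratedDeriv (n + 1) f ζ‖) ≤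
        ((⨆ x : ℝ, ‖iteratedDeriv n f x‖) + ∫ ζ : ℝ, ‖iteratedDeriv (n + 1) f ζ‖) /
          |k| ^ (n + 1)) := by
  have hk0 : (0:ℝ) < |k| := abs_pos.mpr hk
  have hd : ∀ m : ℕ, m ≤ n → ∀ x : ℝ,
      HasDerivAt (iteratedDeriv m f) (iteratedDeriv (m + 1) f x) x := by
    intro m hm x
    have hdiff : DifferentiableAt ℝ (iteratedDeriv m f) x := by
      have := hC.differentiable_iteratedDeriv m (by exact_mod_cast Nat.lt_succ_of_le hm)
      exact this.differentiableAt
    rw [iteratedDeriv_succ]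
    exact hdiff.hasDerivAt
  have hP : ∀ m : ℕ, m ≤ n → ∀ ξ : ℝ,
      (∫ ζ in Set.Iic ξ, f ζ * Complex.exp (Complex.I * k * ζ)) =
        -(∑ h ∈ Finset.range m,
            (Complex.I / k) ^ (h + 1) * iteratedDeriv h f ξ * Complex.exp (Complex.I * k * ξ)) +
          (Complex.I / k) ^ m *
            ∫ ζ in Set.Iic ξ, iteratedDeriv m f ζ * Complex.exp (Complex.I * k * ζ) := by
    intro m
    induction m with
    | zero => intro _ ξ; simp [iteratedDeriv_zero]
    | succ m ih =>
      intro hm ξ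
      have hm' : m ≤ n := le_of_lt (Nat.lt_of_succ_le hm)
      rw [ih hm' ξ,
        parts k hk (iteratedDeriv m f) (iteratedDeriv (m + 1) f) (hd m hm')
          (hint m (le_trans hm' (Nat.le_succ n))) (hint (m + 1) (Nat.succ_le_succ hm')) ξ,
        Finset.sum_range_succ]
      ring
  refine ⟨fun ξ => by rw [hRn ξ]; exact hP n le_rfl ξ, fun ξ => ?_⟩
  set A := iteratedDeriv n f ξ with hA
  set J := ∫ ζ in Set.Iic ξ, iteratedDeriv (n + 1) f ζ * Complex.exp (Complex.I * k * ζ) with hJ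
  set B := ∫ ζ in Set.Iic ξ, ‖iteratedDeriv (n + 1) f ζ‖ with hB
  have hRval : Rn ξ = (Complex.I / k) ^ n *
      (-((Complex.I / k) * A * Complex.exp (Complex.I * k * ξ)) + (Complex.I / k) * J) := by
    rw [hRn ξ, parts k hk (iteratedDeriv n f) (iteratedDeriv (n + 1) f) (hd n le_rfl)
      (hint n (Nat.le_succ n)) (hint (n + 1) le_rfl) ξ]
  have hnI : ‖(Complex.I / (k:ℂ))‖ = |k|⁻¹ := by
    simp [norm_div, Real.norm_eq_abs]
  have heq : ∀ ζ : ℝ, ‖iteratedDeriv (n + 1) f ζ * Complex.exp (Complex.I * k * ζ)‖ =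
      ‖iteratedDeriv (n + 1) f ζ‖ := fun ζ => by rw [norm_mul, norm_expI, mul_one]
  have hJle : ‖J‖ ≤ B := by
    calc ‖J‖ ≤ ∫ ζ in Set.Iic ξ, ‖iteratedDeriv (n + 1) f ζ * Complex.exp (Complex.I * k * ζ)‖ :=
          norm_integral_le_integral_norm _
      _ = B := by simp only [heq, hB]
  have hzpow : |k| ^ (-(n:ℤ) - 1) = |k|⁻¹ ^ n * |k|⁻¹ := by
    rw [inv_pow, ← zpow_natCast |k| n, ← zpow_neg, ← zpow_neg_one,
      ← zpow_add₀ (ne_of_gt hk0), sub_eq_add_neg]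
  have hfirst : ‖Rn ξ‖ ≤ |k| ^ (-(n:ℤ) - 1) * (‖A‖ + B) := by
    calc ‖Rn ξ‖ = |k|⁻¹ ^ n *
        ‖-((Complex.I / k) * A * Complex.exp (Complex.I * k * ξ)) + (Complex.I / k) * J‖ := by
          rw [hRval, norm_mul, norm_pow, hnI]
      _ ≤ |k|⁻¹ ^ n * (‖(Complex.I / k) * A * Complex.exp (Complex.I * k * ξ)‖
            + ‖(Complex.I / k) * J‖) := by
          gcongr
          exact (norm_add_le _ _).trans (by rw [norm_neg])
      _ = |k|⁻¹ ^ n * (|k|⁻¹ * ‖A‖ + |k|⁻¹ * ‖J‖) := by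
          rw [norm_mul, norm_mul, norm_mul, hnI, norm_expI, mul_one]
      _ ≤ |k|⁻¹ ^ n * (|k|⁻¹ * ‖A‖ + |k|⁻¹ * B) := by gcongr
      _ = |k| ^ (-(n:ℤ) - 1) * (‖A‖ + B) := by rw [hzpow]; ring
  refine ⟨hfirst, ?_⟩
  obtain ⟨M, hM⟩ := hbdd
  have hsup : ‖A‖ ≤ ⨆ x : ℝ, ‖iteratedDeriv n f x‖ :=
    le_ciSup ⟨M, by rintro _ ⟨x, rfl⟩; exact hM x⟩ ξ
  have hII : B ≤ ∫ ζ : ℝ, ‖iteratedDeriv (n + 1) f ζ‖ :=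
    setIntegral_le_integral (hint (n + 1) le_rfl).norm
      (Filter.Eventually.of_forall fun x => norm_nonneg _)
  have h2 : ((⨆ x : ℝ, ‖iteratedDeriv n f x‖) + ∫ ζ : ℝ, ‖iteratedDeriv (n + 1) f ζ‖) /
      |k| ^ (n + 1) = |k| ^ (-(n:ℤ) - 1) *
        ((⨆ x : ℝ, ‖iteratedDeriv n f x‖) + ∫ ζ : ℝ, ‖iteratedDeriv (n + 1) f ζ‖) := by
    rw [div_eq_inv_mul, ← zpow_natCast |k| (n + 1), ← zpow_neg]
    congr 2
    push_cast
    ring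
  rw [h2]
  have hz : (0:ℝ) ≤ |k| ^ (-(n:ℤ) - 1) := le_of_lt (zpow_pos hk0 _)
  gcongr
end
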